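/- arXiv:1309.6471 — 5 statements merged into one kernel-verified Lean document; each statement's English description precedes it below -/
import Mathlib

section
/- Let T be a tree, 𝒫 = (P_v)_{v∈V} a family of paths of T, and suppose ⟨T,𝒫⟩ is a representation of a pair (G,G'). Then no hole of G with at least 4 vertices contains an edge of G': if vertices v_0, v_1, …, v_{k−1} (k ≥ 4) induce a chordless cycle in G (consecutive ones adjacent, non-consecutive ones non-adjacent), then for every index i the pair {v_i, v_{(i+1) mod k}} is not an edge of G'. -/
open SimpleGraph

namespace ENPT

variable {β V W U : Type}

/-- A graph on a subset of `β`, modeled as a subgraph of the complete graph on `β`. -/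
abbrev SubG (β : Type) := SimpleGraph.Subgraph (⊤ : SimpleGraph β)

/-- `H` is a path: connected, with at least one edge, and maximum degree 2. -/
def IsPathSub (H : SubG β) : Prop :=
  H.Connected ∧ H.edgeSet.Nonempty ∧ ∀ v : β, (H.neighborSet v).ncard ≤ 2

/-- The split vertices of two subgraphs: vertices of degree at least 3 in their union. -/
def Split (P Q : SubG β) : Set β := {v | 3 ≤ ((P ⊔ Q).neighborSet v).ncard}

/-- Two subgraphs edge-intersect. -/
def EdgeInt (P Q : SubG β) : Prop := (P.edgeSet ∩ Q.edgeSet).Nonempty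

lemma EdgeInt.symm {P Q : SubG β} (h : EdgeInt P Q) : EdgeInt Q P := by
  unfold EdgeInt at h ⊢; rwa [Set.inter_comm]

lemma Split_comm (P Q : SubG β) : Split P Q = Split Q P := by
  unfold Split; rw [sup_comm]

/-- `P ∼ Q` : edge-intersecting and non-splitting. -/
def NonSplit (P Q : SubG β) : Prop := EdgeInt P Q ∧ Split P Q = ∅

lemma NonSplit.symm {P Q : SubG β} (h : NonSplit P Q) : NonSplit Q P :=
  ⟨h.1.symm, by rw [Split_comm]; exact h.2⟩

/-- The EPT graph of a family of paths. -/
def EPTg (Ps : V → SubG β) : SimpleGraph V where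
  Adj u v := u ≠ v ∧ EdgeInt (Ps u) (Ps v)
  symm := ⟨fun u v h => ⟨Ne.symm h.1, h.2.symm⟩⟩
  loopless := ⟨fun u h => h.1 rfl⟩

/-- The ENPT graph of a family of paths. -/
def ENPTg (Ps : V → SubG β) : SimpleGraph V where
  Adj u v := u ≠ v ∧ NonSplit (Ps u) (Ps v)
  symm := ⟨fun u v h => ⟨Ne.symm h.1, h.2.symm⟩⟩
  loopless := ⟨fun u h => h.1 rfl⟩

/-- `⟨T, Ps⟩` is a representation of the pair `(G, G')`. -/
structure IsRep (T : SubG β) (Ps : V → SubG β) (G G' : SimpleGraph V) : Prop where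
  tree : T.coe.IsTree
  sub : ∀ v, Ps v ≤ T
  path : ∀ v, IsPathSub (Ps v)
  ept : EPTg Ps = G
  enpt : ENPTg Ps = G'

/-- Property (P3) of a representation: no red edge-clique of size 3. -/
def SatP3 (Ps : V → SubG β) : Prop :=
  ¬ ∃ (e : Sym2 β) (p q r : V), p ≠ q ∧ p ≠ r ∧ q ≠ r ∧
    e ∈ (Ps p).edgeSet ∧ e ∈ (Ps q).edgeSet ∧ e ∈ (Ps r).edgeSet ∧
    (Split (Ps p) (Ps q)).Nonempty ∧ (Split (Ps p) (Ps r)).Nonempty ∧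
    (Split (Ps q) (Ps r)).Nonempty

/-- The map merging `q` into `p`. -/
def mergeMap [DecidableEq V] (p q : V) : V → V := fun x => if x = q then p else x

/-- The image of a subgraph under the merge of `b` into `a` (contraction of `{a,b}`). -/
def cImage [DecidableEq β] (a b : β) (H : SubG β) : SubG β where
  verts := mergeMap a b '' H.verts
  Adj x y := x ≠ y ∧ ∃ x' y', H.Adj x' y' ∧ x = mergeMap a b x' ∧ y = mergeMap a b y'
  adj_sub := by
    rintro x y ⟨h, -⟩
    exact h
  edge_vert := by
    rintro x y ⟨h, x', y', hadj, rfl, rfl⟩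
    exact ⟨x', H.edge_vert hadj, rfl⟩
  symm := by
    constructor
    rintro x y ⟨h, x', y', hadj, rfl, rfl⟩
    exact ⟨h.symm, y', x', hadj.symm, rfl, rfl⟩

/-- Delete from `H` the vertex `x` and all edges at `x` (used for tail removal). -/
def delTail (x : β) (H : SubG β) : SubG β where
  verts := H.verts \ {x}
  Adj u w := H.Adj u w ∧ u ≠ x ∧ w ≠ x
  adj_sub := fun h => H.adj_sub h.1
  edge_vert := by
    rintro u w ⟨h, hu, hw⟩
    exact ⟨H.edge_vert h, by simpa using hu⟩
  symm := by
    constructor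
    rintro u w ⟨h, hu, hw⟩
    exact ⟨h.symm, hw, hu⟩

/-- A pair `⟨tree, family of paths⟩`. -/
structure Rep (β V : Type) where
  T : SubG β
  P : V → SubG β

/-- Well-formedness: the tree is a tree and each member of the family is a path of it. -/
def Rep.WF (R : Rep β V) : Prop :=
  R.T.coe.IsTree ∧ (∀ v, R.P v ≤ R.T) ∧ ∀ v, IsPathSub (R.P v)

/-- `R` is a representation of the pair `(G, G')`. -/
def Rep.IsRepOf (R : Rep β V) (G G' : SimpleGraph V) : Prop := IsRep R.T R.P G G'

/-- A single minifying operation: contraction of a tree edge, or removal of a tail of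
one of the paths. -/
inductive MinifyStep [DecidableEq β] [DecidableEq V] : Rep β V → Rep β V → Prop
  | contract (R : Rep β V) (a b : β) (hab : R.T.Adj a b)
      (hkeep : ∀ v, (cImage a b (R.P v)).edgeSet.Nonempty) :
      MinifyStep R ⟨cImage a b R.T, fun v => cImage a b (R.P v)⟩
  | tail (R : Rep β V) (v₀ : V) (x y : β) (hxy : (R.P v₀).Adj x y)
      (hdeg : ((R.P v₀).neighborSet x).ncard = 1)
      (htwo : 2 ≤ (R.P v₀).edgeSet.ncard) :
      MinifyStep R ⟨R.T, Function.update R.P v₀ (delTail x (R.P v₀))⟩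

/-- A minimal representation of `(G, G')`: no single minifying operation yields again a
representation of `(G, G')`. -/
def IsMinimalRep [DecidableEq β] [DecidableEq V] (T : SubG β) (Ps : V → SubG β)
    (G G' : SimpleGraph V) : Prop :=
  IsRep T Ps G G' ∧ ∀ R' : Rep β V, MinifyStep ⟨T, Ps⟩ R' → ¬ R'.IsRepOf G G'

/-- The cycle on `ZMod n`, vertices labeled in cyclic order. -/
def cycleG (n : ℕ) : SimpleGraph (ZMod n) :=
  SimpleGraph.fromRel (fun i j => j = i + 1)

/-- Property (P2) of a pair: no four vertices inducing a `K4` in `G` and a `P4` in `G'`. -/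
def NoK4P4 (G G' : SimpleGraph V) : Prop :=
  ¬ ∃ a b c d : V,
    G.Adj a b ∧ G.Adj a c ∧ G.Adj a d ∧ G.Adj b c ∧ G.Adj b d ∧ G.Adj c d ∧
    G'.Adj a b ∧ G'.Adj b c ∧ G'.Adj c d ∧ ¬G'.Adj a c ∧ ¬G'.Adj a d ∧ ¬G'.Adj b d

/-- The contraction `G/e` of the edge `e = {p,q}`, merging `q` into `p`,
realized on the vertex set `V ∖ {q}`. -/
def contrG [DecidableEq V] (G : SimpleGraph V) (p q : V) : SimpleGraph {x : V // x ≠ q} where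
  Adj a b := a ≠ b ∧ ∃ x y : V, G.Adj x y ∧ (a : V) = mergeMap p q x ∧ (b : V) = mergeMap p q y
  symm := by
    constructor
    rintro a b ⟨h, x, y, hxy, hx, hy⟩
    exact ⟨h.symm, y, x, hxy.symm, hy, hx⟩
  loopless := by constructor; rintro a ⟨h, -⟩; exact h rfl

/-- The contractibility condition for the edge `{p,q}` in the pair `(G,G')`:
no edge of `G'` sharing exactly one endpoint with `{p,q}` closes a triangle of `G`. -/
def ContractibleCond (G G' : SimpleGraph V) (p q : V) : Prop :=
  ∀ r : V, (G'.Adj p r → r ≠ q → ¬ G.Adj q r) ∧ (G'.Adj q r → r ≠ p → ¬ G.Adj p r)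

/-- `{p,q}` is a contractible edge of the pair `(G,G')`. -/
def ContractibleEdge (G G' : SimpleGraph V) (p q : V) : Prop :=
  G'.Adj p q ∧ ContractibleCond G G' p q

/-- `core` is a path between the two (distinct) endpoints `u` and `v`. -/
def IsPathBetween (core : SubG β) (u v : β) : Prop :=
  IsPathSub core ∧ u ∈ core.verts ∧ v ∈ core.verts ∧
    ∀ w ∈ core.verts, ((core.neighborSet w).ncard = 1 ↔ (w = u ∨ w = v))

/-- Delete a set of edges from a subgraph (keeping the vertices). -/
def delEdgesSub (H : SubG β) (s : Set (Sym2 β)) : SubG β where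
  verts := H.verts
  Adj x y := H.Adj x y ∧ s(x, y) ∉ s
  adj_sub := fun h => H.adj_sub h.1
  edge_vert := fun h => H.edge_vert h.1
  symm := by
    constructor
    rintro x y ⟨h, hs⟩
    refine ⟨h.symm, ?_⟩
    rwa [Sym2.eq_swap]

/-- The join of two graphs. -/
def joinG (H : SimpleGraph W) (K : SimpleGraph U) : SimpleGraph (W ⊕ U) where
  Adj x y :=
    match x, y with
    | Sum.inl a, Sum.inl b => H.Adj a b
    | Sum.inr a, Sum.inr b => K.Adj a b
    | Sum.inl _, Sum.inr _ => True
    | Sum.inr _, Sum.inl _ => True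
  symm := by
    constructor
    rintro (a | a) (b | b) h
    · exact h.symm
    · trivial
    · trivial
    · exact h.symm
  loopless := by
    constructor
    rintro (a | a) h
    · exact H.loopless.irrefl a h
    · exact K.loopless.irrefl a h

/-- The component graph `comp(G,C,K)`: vertices are the connected components of the
subgraph of `G` induced on the complement of `K`, two components being adjacent iff some
vertex of `K` is adjacent in `C` to both of them. -/
def compGraph (G C : SimpleGraph V) (K : Set V) :
    SimpleGraph (SimpleGraph.induce (Kᶜ : Set V) G).ConnectedComponent where
  Adj A B := A ≠ B ∧ ∃ v ∈ K, ∃ a b : (Kᶜ : Set V),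
    C.Adj v (a : V) ∧ C.Adj v (b : V) ∧
    (SimpleGraph.induce (Kᶜ : Set V) G).connectedComponentMk a = A ∧
    (SimpleGraph.induce (Kᶜ : Set V) G).connectedComponentMk b = B
  symm := by
    constructor
    rintro A B ⟨h, v, hv, a, b, h1, h2, h3, h4⟩
    exact ⟨h.symm, v, hv, b, a, h2, h1, h4, h3⟩
  loopless := by constructor; rintro A ⟨h, -⟩; exact h rfl

/-- The map merging both endpoints of an edge into the smaller one. -/
def minMerge [LinearOrder V] (a b : V) : V → V :=
  fun x => if x = a ∨ x = b then min a b else x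

/-- Contraction of the edge `{a,b}` of a graph, the merged vertex being named
`min a b` (the other endpoint remains as an isolated vertex). -/
def contrMin [LinearOrder V] (G : SimpleGraph V) (a b : V) : SimpleGraph V where
  Adj x y := x ≠ y ∧ ∃ x' y', G.Adj x' y' ∧ x = minMerge a b x' ∧ y = minMerge a b y'
  symm := by
    constructor
    rintro x y ⟨h, x', y', hxy, hx, hy⟩
    exact ⟨h.symm, y', x', hxy.symm, hy, hx⟩
  loopless := by constructor; rintro x ⟨h, -⟩; exact h rfl

/-- Simultaneous contraction in a pair of graphs. -/
def stepPair [LinearOrder V] (GG : SimpleGraph V × SimpleGraph V) (e : V × V) :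
    SimpleGraph V × SimpleGraph V :=
  (contrMin GG.1 e.1 e.2, contrMin GG.2 e.1 e.2)

/-- Iterated contraction of a list of edges (given by their original names; `f` is the
accumulated merging map). -/
def contractGo [LinearOrder V] (f : V → V) (GG : SimpleGraph V × SimpleGraph V) :
    List (V × V) → SimpleGraph V × SimpleGraph V
  | [] => GG
  | e :: l => contractGo (minMerge (f e.1) (f e.2) ∘ f) (stepPair GG (f e.1, f e.2)) l

/-- The iterated contraction is defined: at each step the image of the next edge is an
edge of the current second graph and is contractible in the current pair. -/
def DefinedGo [LinearOrder V] (f : V → V) (GG : SimpleGraph V × SimpleGraph V) :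
    List (V × V) → Prop
  | [] => True
  | e :: l => (GG.2.Adj (f e.1) (f e.2) ∧ ContractibleCond GG.1 GG.2 (f e.1) (f e.2)) ∧
      DefinedGo (minMerge (f e.1) (f e.2) ∘ f) (stepPair GG (f e.1, f e.2)) l


section Stmt0Aux

variable {G : SimpleGraph β}

lemma mem_spanning_edgeSet {H : SubG β} {e : Sym2 β} :
    e ∈ H.spanningCoe.edgeSet ↔ e ∈ H.edgeSet := by
  induction e using Sym2.ind with
  | _ x y => simp [SimpleGraph.mem_edgeSet, Subgraph.mem_edgeSet]

lemma reachable_spanning {H : SubG β} (h : H.Connected) {x y : β}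
    (hx : x ∈ H.verts) (hy : y ∈ H.verts) : H.spanningCoe.Reachable x y := by
  have hco : H.coe.Reachable ⟨x, hx⟩ ⟨y, hy⟩ := (Subgraph.connected_iff'.mp h).preconnected _ _
  exact hco.map ⟨Subtype.val, fun {a b} hab => hab⟩

lemma exists_lift {T : SubG β} :
    ∀ {x y : β} (w : T.spanningCoe.Walk x y) (hx : x ∈ T.verts) (hy : y ∈ T.verts),
    ∃ w' : T.coe.Walk ⟨x, hx⟩ ⟨y, hy⟩,
      w'.support.map Subtype.val = w.support ∧
      w'.edges.map (Sym2.map Subtype.val) = w.edges := by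
  intro x y w
  induction w with
  | nil => intro hx hy; exact ⟨.nil, by simp, by simp⟩
  | @cons x u y h t ih =>
    intro hx hy
    have hT : T.Adj x u := h
    have hu : u ∈ T.verts := T.edge_vert hT.symm
    obtain ⟨t', h1, h2⟩ := ih hu hy
    refine ⟨.cons (show T.coe.Adj ⟨x, hx⟩ ⟨u, hu⟩ from hT) t', ?_, ?_⟩ <;> simp [h1, h2]

lemma path_edges_unique {T : SubG β} (hTa : T.coe.IsAcyclic) {x y : β}
    (hx : x ∈ T.verts) (hy : y ∈ T.verts)
    {p q : T.spanningCoe.Walk x y} (hp : p.IsPath) (hq : q.IsPath) : p.edges = q.edges := by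
  obtain ⟨p', hp1, hp2⟩ := exists_lift p hx hy
  obtain ⟨q', hq1, hq2⟩ := exists_lift q hx hy
  have hp' : p'.IsPath := by
    rw [Walk.isPath_def] at hp ⊢
    rw [← hp1] at hp
    exact hp.of_map
  have hq' : q'.IsPath := by
    rw [Walk.isPath_def] at hq ⊢
    rw [← hq1] at hq
    exact hq.of_map
  have heq : p' = q' := by
    have := hTa.path_unique ⟨p', hp'⟩ ⟨q', hq'⟩
    exact congrArg Subtype.val this
  rw [← hp2, ← hq2, heq]

lemma spanning_acyclic {T : SubG β} (hTa : T.coe.IsAcyclic) : T.spanningCoe.IsAcyclic := by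
  intro v c hc
  have hlen := hc.three_le_length
  have hv : v ∈ T.verts := by
    have h0 : T.spanningCoe.Adj v (c.getVert 1) := by
      have := c.adj_getVert_succ (i := 0) (by omega)
      simpa [Walk.getVert_zero] using this
    exact T.edge_vert h0
  obtain ⟨c', h1, h2⟩ := exists_lift c hv hv
  refine hTa c' ⟨⟨⟨?_⟩, ?_⟩, ?_⟩
  · have := hc.edges_nodup
    rw [← h2] at this
    exact this.of_map
  · intro hnil
    subst hnil
    simp at h2
    rw [← Walk.length_edges] at hlen
    rw [Walk.length_edges, Walk.nil_iff_length_eq.mp h2] at hlen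
    simp at hlen
  · have := hc.support_nodup
    rw [← h1, ← List.map_tail] at this
    exact this.of_map

lemma getVert_eq_support_getD :
    ∀ {x y : β} (p : G.Walk x y) (n : ℕ) (d : β), n ≤ p.length → p.getVert n = p.support.getD n d := by
  intro x y p
  induction p with
  | nil =>
    intro n d hn
    have hn0 : n = 0 := by simpa using hn
    subst hn0; simp [Walk.getVert]
  | cons h t ih =>
    intro n d hn
    cases n with
    | zero => simp [Walk.getVert_zero]
    | succ n => simpa [Walk.getVert_cons_succ] using ih n d (by simpa using hn)

lemma edges_getD :
    ∀ {x y : β} (p : G.Walk x y) (n : ℕ) (d : Sym2 β), n < p.length →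
      p.edges.getD n d = s(p.getVert n, p.getVert (n + 1)) := by
  intro x y p
  induction p with
  | nil => intro n d hn; simp at hn
  | cons h t ih =>
    intro n d hn
    cases n with
    | zero =>
      simp [Walk.edges_cons, Walk.getVert_zero, Walk.getVert_cons_succ]
    | succ n => simpa [Walk.edges_cons, Walk.getVert_cons_succ] using ih n d (by simpa using hn)

lemma exists_dropWalk :
    ∀ {x y : β} (p : G.Walk x y) (i : ℕ), i ≤ p.length →
      ∃ q : G.Walk (p.getVert i) y, q.edges = p.edges.drop i ∧ q.support = p.support.drop i := by
  intro x y p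
  induction p with
  | nil =>
    intro i hi
    have hi0 : i = 0 := by simpa using hi
    subst hi0; exact ⟨.nil, by simp, by simp⟩
  | cons h t ih =>
    intro i hi
    cases i with
    | zero => exact ⟨Walk.cons h t, by rfl, by rfl⟩
    | succ i =>
      obtain ⟨q, h1, h2⟩ := ih i (by simpa using hi)
      exact ⟨q, by simpa using h1, by simpa using h2⟩

lemma exists_takeWalk :
    ∀ {x y : β} (p : G.Walk x y) (j : ℕ), j ≤ p.length →
      ∃ q : G.Walk x (p.getVert j), q.edges = p.edges.take j ∧ q.support = p.support.take (j + 1) := by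
  intro x y p
  induction p with
  | nil =>
    intro j hj
    have hj0 : j = 0 := by simpa using hj
    subst hj0; exact ⟨.nil, by simp, by simp⟩
  | cons h t ih =>
    intro j hj
    cases j with
    | zero => exact ⟨.nil, by rfl, by rfl⟩
    | succ j =>
      obtain ⟨q, h1, h2⟩ := ih j (by simpa using hj)
      exact ⟨Walk.cons h q, by simp [h1], by simp [h2]⟩

lemma exists_subwalk {x y : β} (p : G.Walk x y) (i j : ℕ) (hij : i ≤ j) (hj : j ≤ p.length) :
    ∃ q : G.Walk (p.getVert i) (p.getVert j),
      q.edges = (p.edges.drop i).take (j - i) ∧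
      q.support = (p.support.drop i).take (j - i + 1) := by
  obtain ⟨q1, e1, s1⟩ := exists_dropWalk p i (le_trans hij hj)
  have hlen1 : q1.length = p.length - i := by
    have := congrArg List.length e1
    simpa [Walk.length_edges] using this
  obtain ⟨q2, e2, s2⟩ := exists_takeWalk q1 (j - i) (by omega)
  have hend : q1.getVert (j - i) = p.getVert j := by
    rw [getVert_eq_support_getD q1 _ y (by omega), getVert_eq_support_getD p j y hj, s1,
      List.getD_eq_getElem?_getD, List.getD_eq_getElem?_getD, List.getElem?_drop]
    congr 2
    omega
  exact ⟨(q2.copy rfl hend), by simpa [e1] using e2, by simpa [s1] using s2⟩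

lemma interior_neighbors :
    ∀ {u z : β} (p : G.Walk u z), p.IsPath → ∀ c, c ∈ p.support → c ≠ u → c ≠ z →
      ∃ x1 x2 : β, x1 ≠ x2 ∧ s(c, x1) ∈ p.edges ∧ s(c, x2) ∈ p.edges := by
  intro u z p
  induction p with
  | nil =>
    intro _ c hc hcu _
    simp at hc
    exact absurd hc hcu
  | @cons u v z h t ih =>
    intro hp c hc hcu hcz
    rw [Walk.support_cons, List.mem_cons] at hc
    rcases hc with rfl | hc
    · exact absurd rfl hcu
    · by_cases hcv : c = v
      · subst hcv
        cases t with
        | nil => exact absurd rfl hcz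
        | @cons _ v2 _ h2 t2 =>
          refine ⟨u, v2, ?_, ?_, ?_⟩
          · rintro rfl
            have hmem : u ∈ (Walk.cons h2 t2).support := by
              rw [Walk.support_cons]
              exact List.mem_cons_of_mem _ t2.start_mem_support
            exact ((Walk.cons_isPath_iff h _).mp hp).2 hmem
          · rw [Sym2.eq_swap]
            simp
          · simp
      · have ht : t.IsPath := ((Walk.cons_isPath_iff h t).mp hp).1
        obtain ⟨x1, x2, h12, e1, e2⟩ := ih ht c hc hcv hcz
        exact ⟨x1, x2, h12, List.mem_cons_of_mem _ e1, List.mem_cons_of_mem _ e2⟩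

lemma exists_boundary {S : Set β} :
    ∀ {c u : β} (W : G.Walk c u), c ∉ S → u ∈ S →
      ∃ c' d', G.Adj c' d' ∧ c' ∉ S ∧ d' ∈ S := by
  intro c u W
  induction W with
  | nil => intro h1 h2; exact absurd h2 h1
  | @cons c m u h t ih =>
    intro h1 h2
    by_cases hm : m ∈ S
    · exact ⟨c, m, h, h1, hm⟩
    · exact ih hm h2

lemma exists_max_path [Fintype β] {c d : β} (h : G.Adj c d) :
    ∃ (u z : β) (p : G.Walk u z), p.IsPath ∧ 1 ≤ p.length ∧
      ∀ (u' z' : β) (q : G.Walk u' z'), q.IsPath → q.length ≤ p.length := by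
  classical
  set P : ℕ → Prop := fun n => ∃ (u z : β) (p : G.Walk u z), p.IsPath ∧ p.length = n with hPdef
  have hP1 : P 1 := ⟨c, d, Walk.cons h .nil, by simp [Walk.cons_isPath_iff, h.ne], by simp⟩
  have hcard : 1 ≤ Fintype.card β := Fintype.card_pos_iff.mpr ⟨c⟩
  have hbound : ∀ n, P n → n ≤ Fintype.card β := by
    rintro n ⟨u, z, p, hp, rfl⟩
    exact hp.length_lt.le
  have hN1 : 1 ≤ Nat.findGreatest P (Fintype.card β) := Nat.le_findGreatest hcard hP1
  have hspec : P (Nat.findGreatest P (Fintype.card β)) :=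
    Nat.findGreatest_spec hcard hP1
  obtain ⟨u, z, p, hp, hlen⟩ := hspec
  refine ⟨u, z, p, hp, by omega, ?_⟩
  intro u' z' q hq
  by_contra hlt
  push_neg at hlt
  have hgt : Nat.findGreatest P (Fintype.card β) < q.length := by omega
  exact Nat.findGreatest_is_greatest hgt (hbound _ ⟨u', z', q, hq, rfl⟩) ⟨u', z', q, hq, rfl⟩

lemma ham [Fintype β] {Q T : SubG β} (hQT : Q ≤ T) (hTa : T.coe.IsAcyclic)
    (hcon : Q.Connected) (hne : Q.edgeSet.Nonempty)
    (hdeg : ∀ w : β, (Q.neighborSet w).ncard ≤ 2) :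
    ∃ (u z : β) (p : Q.spanningCoe.Walk u z), p.IsPath ∧ ∀ e ∈ Q.edgeSet, e ∈ p.edges := by
  classical
  have hGQa : Q.spanningCoe.IsAcyclic := by
    intro v c hc
    have hsub : ∀ e ∈ c.edges, e ∈ T.spanningCoe.edgeSet := by
      intro e he
      exact mem_spanning_edgeSet.mpr (Subgraph.edgeSet_mono hQT
        (mem_spanning_edgeSet.mp (c.edges_subset_edgeSet he)))
    exact spanning_acyclic hTa (c.transfer T.spanningCoe hsub) (hc.transfer hsub)
  obtain ⟨c, d, hcd⟩ : ∃ c d, Q.Adj c d := by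
    obtain ⟨e, he⟩ := hne
    induction e using Sym2.ind with
    | _ c d => exact ⟨c, d, he⟩
  obtain ⟨u, z, p, hp, hp1, hmax⟩ := exists_max_path (G := Q.spanningCoe) (c := c) (d := d) hcd
  -- every vertex with an edge is on p
  have hsup : ∀ {c' d' : β}, Q.Adj c' d' → c' ∈ p.support := by
    intro c' d' hcd'
    by_contra hc'
    have hu_in : u ∈ Q.verts := by
      have h01 : Q.spanningCoe.Adj u (p.getVert 1) := by
        simpa [Walk.getVert_zero] using p.adj_getVert_succ (i := 0) (by omega)
      exact Q.edge_vert h01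
    obtain ⟨W⟩ := reachable_spanning hcon (Q.edge_vert hcd') hu_in
    obtain ⟨c0, d0, hadj0, hc0, hd0⟩ :=
      exists_boundary (S := {x | x ∈ p.support}) W hc' p.start_mem_support
    by_cases hd0u : d0 = u
    · have hd0u' := hd0u.symm; subst hd0u'
      have hnew : (Walk.cons hadj0 p).IsPath := (Walk.cons_isPath_iff _ _).mpr ⟨hp, hc0⟩
      have := hmax _ _ _ hnew
      simp at this
    · by_cases hd0z : d0 = z
      · have hd0z' := hd0z.symm; subst hd0z'
        have hadj0' : Q.spanningCoe.Adj c0 z := hadj0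
        have hc0' : c0 ∉ p.reverse.support := by
          rw [Walk.support_reverse]
          simpa using hc0
        have hnew : (Walk.cons hadj0' p.reverse).IsPath :=
          (Walk.cons_isPath_iff _ _).mpr ⟨hp.reverse, hc0'⟩
        have := hmax _ _ _ hnew
        simp at this
      · obtain ⟨x1, x2, h12, e1, e2⟩ := interior_neighbors p hp d0 hd0 hd0u hd0z
        have hx1 : Q.Adj d0 x1 := p.edges_subset_edgeSet e1
        have hx2 : Q.Adj d0 x2 := p.edges_subset_edgeSet e2
        have hc0adj : Q.Adj d0 c0 := hadj0.symm
        have h1c : x1 ≠ c0 := fun he => hc0 (he ▸ p.snd_mem_support_of_mem_edges e1)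
        have h2c : x2 ≠ c0 := fun he => hc0 (he ▸ p.snd_mem_support_of_mem_edges e2)
        have hsubset : ({x1, x2, c0} : Set β) ⊆ Q.neighborSet d0 := by
          intro w hw
          rcases hw with rfl | rfl | rfl
          exacts [hx1, hx2, hc0adj]
        have h3 : ({x1, x2, c0} : Set β).ncard = 3 :=
          Set.ncard_eq_three.mpr ⟨x1, x2, c0, h12, h1c, h2c, rfl⟩
        have hle := Set.ncard_le_ncard hsubset (Set.toFinite _)
        have := hdeg d0
        omega
  refine ⟨u, z, p, hp, ?_⟩
  intro e he
  induction e using Sym2.ind with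
  | _ c' d' =>
  by_contra hnot
  have he' : Q.Adj c' d' := he
  have hinterior : ∀ w1 w2 : β, Q.Adj w1 w2 → s(w1, w2) ∉ p.edges → w1 ≠ u → w1 ≠ z → False := by
    intro w1 w2 hadj hnotin hneu hnez
    obtain ⟨x1, x2, h12, e1, e2⟩ := interior_neighbors p hp w1 (hsup hadj) hneu hnez
    have h1c : x1 ≠ w2 := by rintro rfl; exact hnotin e1
    have h2c : x2 ≠ w2 := by rintro rfl; exact hnotin e2
    have hsubset : ({x1, x2, w2} : Set β) ⊆ Q.neighborSet w1 := by
      intro w hw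
      rcases hw with rfl | rfl | rfl
      exacts [p.edges_subset_edgeSet e1, p.edges_subset_edgeSet e2, hadj]
    have h3 : ({x1, x2, w2} : Set β).ncard = 3 :=
      Set.ncard_eq_three.mpr ⟨x1, x2, w2, h12, h1c, h2c, rfl⟩
    have hle := Set.ncard_le_ncard hsubset (Set.toFinite _)
    have := hdeg w1
    omega
  by_cases hc'u : c' = u
  · by_cases hd'z : d' = z
    · have h1 := hc'u.symm; subst h1; have h2 := hd'z.symm; subst h2
      have hzu : Q.spanningCoe.Adj z u := he'.symm
      have hcyc : (Walk.cons hzu p).IsCycle := by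
        rw [Walk.cons_isCycle_iff]
        exact ⟨hp, by rwa [Sym2.eq_swap]⟩
      exact hGQa _ hcyc
    · by_cases hd'u : d' = u
      · have h1 := hc'u.symm; subst h1; have h2 := hd'u.symm; subst h2; exact (Q.adj_sub he').ne rfl
      · exact hinterior d' c' he'.symm (by rwa [Sym2.eq_swap]) hd'u hd'z
  · by_cases hc'z : c' = z
    · by_cases hd'u : d' = u
      · have h1 := hc'z.symm; subst h1; have h2 := hd'u.symm; subst h2
        have hzu : Q.spanningCoe.Adj z u := he'
        have hcyc : (Walk.cons hzu p).IsCycle := by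
          rw [Walk.cons_isCycle_iff]
          exact ⟨hp, hnot⟩
        exact hGQa _ hcyc
      · by_cases hd'z : d' = z
        · have h1 := hc'z.symm; subst h1; have h2 := hd'z.symm; subst h2; exact (Q.adj_sub he').ne rfl
        · exact hinterior d' c' he'.symm (by rwa [Sym2.eq_swap]) hd'u hd'z
    · exact hinterior c' d' he' hnot hc'u hc'z

lemma spanning_edge_trans {P T : SubG β} (hPT : P ≤ T) {x y : β}
    (w : P.spanningCoe.Walk x y) : ∀ e ∈ w.edges, e ∈ T.spanningCoe.edgeSet := by
  intro e he
  exact mem_spanning_edgeSet.mpr (Subgraph.edgeSet_mono hPT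
    (mem_spanning_edgeSet.mp (w.edges_subset_edgeSet he)))

lemma contig {T P Q : SubG β} (hTa : T.coe.IsAcyclic)
    (hPT : P ≤ T) (hQT : Q ≤ T) (hPcon : P.Connected)
    {u z : β} {p : Q.spanningCoe.Walk u z} (hp : p.IsPath) {i m j : ℕ}
    (him : i < m) (hmj : m < j) (hj : j < p.length)
    (hiP : s(p.getVert i, p.getVert (i + 1)) ∈ P.edgeSet)
    (hjP : s(p.getVert j, p.getVert (j + 1)) ∈ P.edgeSet) :
    s(p.getVert m, p.getVert (m + 1)) ∈ P.edgeSet := by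
  set em := s(p.getVert m, p.getVert (m + 1)) with hem
  have hxP : p.getVert (i + 1) ∈ P.verts :=
    P.mem_verts_of_mem_edge hiP (Sym2.mem_mk_right _ _)
  have hyP : p.getVert j ∈ P.verts :=
    P.mem_verts_of_mem_edge hjP (Sym2.mem_mk_left _ _)
  obtain ⟨q, eq_edges, eq_supp⟩ := exists_subwalk p (i + 1) j (by omega) (by omega)
  have hqpath : q.IsPath := by
    rw [Walk.isPath_def, eq_supp]
    exact ((List.take_sublist _ _).trans (List.drop_sublist _ _)).nodup hp.support_nodup
  have hm_lt : m < p.edges.length := by rw [Walk.length_edges]; omega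
  have hgetm : p.edges[m] = em := by
    have h1 := edges_getD p m em (by omega)
    rwa [List.getD_eq_getElem _ _ hm_lt] at h1
  have hem_q : em ∈ q.edges := by
    have hsome : (List.take (j - (i + 1)) (List.drop (i + 1) p.edges))[m - (i + 1)]? = some em := by
      rw [List.getElem?_take, if_pos (by omega), List.getElem?_drop]
      have heq : i + 1 + (m - (i + 1)) = m := by omega
      rw [heq, List.getElem?_eq_getElem hm_lt, hgetm]
    rw [eq_edges]
    exact List.mem_of_getElem? hsome
  classical
  obtain ⟨W⟩ := reachable_spanning hPcon hxP hyP
  have hedges : (q.transfer T.spanningCoe (spanning_edge_trans hQT q)).edges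
      = ((W.transfer T.spanningCoe (spanning_edge_trans hPT W)).bypass).edges :=
    path_edges_unique hTa (hPT.1 hxP) (hPT.1 hyP) (hqpath.transfer _) (Walk.bypass_isPath _)
  have hem_W : em ∈ W.edges := by
    have h1 : em ∈ (q.transfer T.spanningCoe (spanning_edge_trans hQT q)).edges := by
      rw [Walk.edges_transfer]
      exact hem_q
    rw [hedges] at h1
    have h2 := Walk.edges_bypass_subset _ h1
    rwa [Walk.edges_transfer] at h2
  exact mem_spanning_edgeSet.mp (W.edges_subset_edgeSet hem_W)

lemma main [Fintype β] {T P0 P1 R : SubG β}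
    (hTa : T.coe.IsAcyclic)
    (h0 : IsPathSub P0) (h1 : IsPathSub P1) (h0T : P0 ≤ T) (h1T : P1 ≤ T)
    (hint : (P0.edgeSet ∩ P1.edgeSet).Nonempty)
    (hsplit : Split P0 P1 = ∅)
    (hRcon : R.Connected) (hRT : R ≤ T)
    {a b : Sym2 β}
    (ha1 : a ∈ P1.edgeSet) (ha0 : a ∉ P0.edgeSet) (haR : a ∈ R.edgeSet)
    (hb0 : b ∈ P0.edgeSet) (hb1 : b ∉ P1.edgeSet) (hbR : b ∈ R.edgeSet)
    (hdisj : ∀ e ∈ R.edgeSet, ¬(e ∈ P0.edgeSet ∧ e ∈ P1.edgeSet)) : False := by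
  obtain ⟨e0, he00, he01⟩ := hint
  have hQT : (P0 ⊔ P1) ≤ T := sup_le h0T h1T
  have hvert : ((P0 ⊓ P1) : SubG β).verts.Nonempty := by
    induction e0 using Sym2.ind with
    | _ s t =>
      exact ⟨s, P0.edge_vert (Subgraph.mem_edgeSet.mp he00),
        P1.edge_vert (Subgraph.mem_edgeSet.mp he01)⟩
  have hQcon : (P0 ⊔ P1).Connected := Subgraph.connected_sup h0.1.preconnected h1.1.preconnected hvert
  have hQdeg : ∀ w : β, ((P0 ⊔ P1).neighborSet w).ncard ≤ 2 := by
    intro w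
    by_contra hw
    have hmem : w ∈ Split P0 P1 := by
      simp only [Split, Set.mem_setOf_eq]
      omega
    rw [hsplit] at hmem
    exact hmem
  have hQne : (P0 ⊔ P1).edgeSet.Nonempty :=
    ⟨a, by rw [Subgraph.edgeSet_sup]; exact Or.inr ha1⟩
  obtain ⟨u, z, p, hp, hcov⟩ := ham hQT hTa hQcon hQne hQdeg
  have hmema : a ∈ p.edges := hcov a (by rw [Subgraph.edgeSet_sup]; exact Or.inr ha1)
  have hmemb : b ∈ p.edges := hcov b (by rw [Subgraph.edgeSet_sup]; exact Or.inl hb0)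
  have hmeme : e0 ∈ p.edges := hcov e0 (by rw [Subgraph.edgeSet_sup]; exact Or.inl he00)
  have hlenE : p.edges.length = p.length := p.length_edges
  obtain ⟨ia, hiaL, hia⟩ := List.getElem_of_mem hmema
  obtain ⟨ib, hibL, hib⟩ := List.getElem_of_mem hmemb
  obtain ⟨ie, hieL, hie⟩ := List.getElem_of_mem hmeme
  have hE : ∀ n (hn : n < p.length), s(p.getVert n, p.getVert (n + 1))
      = p.edges[n]'(by omega) := by
    intro n hn
    have h1 := edges_getD p n a hn
    rw [List.getD_eq_getElem _ _ (by omega)] at h1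
    exact h1.symm
  have hiaP : ia < p.length := by omega
  have hibP : ib < p.length := by omega
  have hieP : ie < p.length := by omega
  have haeq : s(p.getVert ia, p.getVert (ia + 1)) = a := by rw [hE ia hiaP, hia]
  have hbeq : s(p.getVert ib, p.getVert (ib + 1)) = b := by rw [hE ib hibP, hib]
  have heeq : s(p.getVert ie, p.getVert (ie + 1)) = e0 := by rw [hE ie hieP, hie]
  have hab : a ≠ b := fun h => ha0 (h ▸ hb0)
  have hae : a ≠ e0 := fun h => ha0 (h ▸ he00)
  have hbe : b ≠ e0 := fun h => hb1 (h ▸ he01)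
  have hiaib : ia ≠ ib := by
    rintro rfl
    exact hab (hia ▸ hib)
  have hiaie : ia ≠ ie := by
    rintro rfl
    exact hae (hia ▸ hie)
  have hibie : ib ≠ ie := by
    rintro rfl
    exact hbe (hib ▸ hie)
  rcases lt_or_gt_of_ne hiaib with hlt | hgt
  · -- ia < ib
    have hlo : ia < ie := by
      by_contra hcon'
      push_neg at hcon'
      have hie_lt : ie < ia := by omega
      have := contig hTa h0T hQT h0.1 hp hie_lt hlt hibP (heeq ▸ he00) (hbeq ▸ hb0)
      exact ha0 (haeq ▸ this)
    have hhi : ie < ib := by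
      by_contra hcon'
      push_neg at hcon'
      have hib_lt : ib < ie := by omega
      have := contig hTa h1T hQT h1.1 hp hlt hib_lt hieP (haeq ▸ ha1) (heeq ▸ he01)
      exact hb1 (hbeq ▸ this)
    have := contig hTa hRT hQT hRcon hp hlo hhi hibP (haeq ▸ haR) (hbeq ▸ hbR)
    exact hdisj e0 (heeq ▸ this) ⟨he00, he01⟩
  · -- ib < ia
    have hlo : ib < ie := by
      by_contra hcon'
      push_neg at hcon'
      have hie_lt : ie < ib := by omega
      have := contig hTa h1T hQT h1.1 hp hie_lt hgt hiaP (heeq ▸ he01) (haeq ▸ ha1)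
      exact hb1 (hbeq ▸ this)
    have hhi : ie < ia := by
      by_contra hcon'
      push_neg at hcon'
      have hia_lt : ia < ie := by omega
      have := contig hTa h0T hQT h0.1 hp hgt hia_lt hieP (hbeq ▸ hb0) (heeq ▸ he00)
      exact ha0 (haeq ▸ this)
    have := contig hTa hRT hQT hRcon hp hlo hhi hiaP (hbeq ▸ hbR) (haeq ▸ haR)
    exact hdisj e0 (heeq ▸ this) ⟨he00, he01⟩

/-- Iterated union of a chain of subgraphs. -/
def chain (P : ℕ → SubG β) : ℕ → SubG β
  | 0 => P 0
  | n + 1 => chain P n ⊔ P (n + 1)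

lemma le_chain (P : ℕ → SubG β) {j n : ℕ} (h : j ≤ n) : P j ≤ chain P n := by
  induction n with
  | zero =>
    have hj : j = 0 := by omega
    subst hj
    exact le_rfl
  | succ n ih =>
    rcases Nat.lt_or_ge j (n + 1) with hlt | hge
    · exact (ih (by omega)).trans le_sup_left
    · have hj : j = n + 1 := by omega
      subst hj
      exact le_sup_right

lemma chain_le {P : ℕ → SubG β} {T : SubG β} (h : ∀ j, P j ≤ T) (n : ℕ) : chain P n ≤ T := by
  induction n with
  | zero => exact h 0
  | succ n ih => exact sup_le ih (h (n + 1))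

lemma chain_edge {P : ℕ → SubG β} {n : ℕ} {e : Sym2 β} (he : e ∈ (chain P n).edgeSet) :
    ∃ j ≤ n, e ∈ (P j).edgeSet := by
  induction n with
  | zero => exact ⟨0, le_rfl, he⟩
  | succ n ih =>
    rw [chain, Subgraph.edgeSet_sup] at he
    rcases he with he | he
    · obtain ⟨j, hj, hje⟩ := ih he
      exact ⟨j, by omega, hje⟩
    · exact ⟨n + 1, le_rfl, he⟩

lemma chain_connected {P : ℕ → SubG β} (hc : ∀ j, (P j).Connected)
    (hin : ∀ j, ((P j).edgeSet ∩ (P (j + 1)).edgeSet).Nonempty) (n : ℕ) :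
    (chain P n).Connected := by
  induction n with
  | zero => exact hc 0
  | succ n ih =>
    refine Subgraph.connected_sup ih.preconnected (hc (n + 1)).preconnected ?_
    obtain ⟨e, he1, he2⟩ := hin n
    induction e using Sym2.ind with
    | _ s t =>
      refine ⟨s, ?_, (P (n + 1)).edge_vert (Subgraph.mem_edgeSet.mp he2)⟩
      exact (le_chain P (le_refl n)).1 ((P n).edge_vert (Subgraph.mem_edgeSet.mp he1))

lemma stmt0_aux {β V : Type} [Fintype β]
    {T : SubG β} {Ps : V → SubG β} {G G' : SimpleGraph V}
    (hrep : IsRep T Ps G G') (k : ℕ) (hk : 4 ≤ k) (w : ℕ → V)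
    (hadjw : ∀ m : ℕ, G.Adj (w m) (w (m + 1)))
    (hwk : w k = w 0)
    (hne : ∀ m1 m2 : ℕ, m1 < k → m2 < k → m1 ≠ m2 → w m1 ≠ w m2)
    (hnadj : ∀ m1 m2 : ℕ, m1 < k → m2 < k → m1 ≠ m2 → (m1 + 1) % k ≠ m2 → (m2 + 1) % k ≠ m1 →
      ¬ G.Adj (w m1) (w m2))
    (hG' : G'.Adj (w 0) (w 1)) : False := by
  classical
  have hmodlt : ∀ m : ℕ, m < k → m % k = m := fun m h => Nat.mod_eq_of_lt h
  have hept : ∀ x y : V, G.Adj x y ↔ (x ≠ y ∧ EdgeInt (Ps x) (Ps y)) := by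
    intro x y
    rw [← hrep.ept]
    exact Iff.rfl
  have hns : NonSplit (Ps (w 0)) (Ps (w 1)) := by
    rw [← hrep.enpt] at hG'
    exact (show _ ≠ _ ∧ NonSplit _ _ from hG').2
  have hTa : T.coe.IsAcyclic := hrep.tree.IsAcyclic
  have hEI : ∀ m : ℕ, ((Ps (w m)).edgeSet ∩ (Ps (w (m + 1))).edgeSet).Nonempty := by
    intro m
    exact ((hept _ _).mp (hadjw m)).2
  set P : ℕ → SubG β := fun j => Ps (w (j + 2)) with hP
  set R : SubG β := chain P (k - 3) with hR
  have hRcon : R.Connected := chain_connected (fun j => (hrep.path _).1) (fun j => hEI (j + 2)) _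
  have hRT : R ≤ T := chain_le (fun j => hrep.sub _) _
  obtain ⟨a, ha1, ha2⟩ := hEI 1
  obtain ⟨b, hbk, hb0⟩ := by
    have h := hEI (k - 1)
    rw [show k - 1 + 1 = k by omega, hwk] at h
    exact h
  have ha0 : a ∉ (Ps (w 0)).edgeSet := by
    intro ha0
    exact hnadj 0 2 (by omega) (by omega) (by omega)
      (by rw [hmodlt _ (by omega)]; omega) (by rw [hmodlt _ (by omega)]; omega)
      ((hept _ _).mpr ⟨hne 0 2 (by omega) (by omega) (by omega), ⟨a, ha0, ha2⟩⟩)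
  have hb1 : b ∉ (Ps (w 1)).edgeSet := by
    intro hb1
    exact hnadj 1 (k - 1) (by omega) (by omega) (by omega)
      (by rw [hmodlt _ (by omega)]; omega)
      (by rw [show k - 1 + 1 = k by omega, Nat.mod_self]; omega)
      ((hept _ _).mpr ⟨hne 1 (k - 1) (by omega) (by omega) (by omega), ⟨b, hb1, hbk⟩⟩)
  have haR : a ∈ R.edgeSet := by
    refine Subgraph.edgeSet_mono (le_chain P (Nat.zero_le (k - 3))) ?_
    show a ∈ (Ps (w (0 + 2))).edgeSet
    exact ha2
  have hbR : b ∈ R.edgeSet := by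
    refine Subgraph.edgeSet_mono (le_chain P (le_refl (k - 3))) ?_
    show b ∈ (Ps (w (k - 3 + 2))).edgeSet
    rw [show k - 3 + 2 = k - 1 by omega]
    exact hbk
  have hdisj : ∀ e ∈ R.edgeSet, ¬(e ∈ (Ps (w 0)).edgeSet ∧ e ∈ (Ps (w 1)).edgeSet) := by
    rintro e heR ⟨he0, he1⟩
    obtain ⟨j, hj, hej⟩ := chain_edge heR
    have hej' : e ∈ (Ps (w (j + 2))).edgeSet := hej
    have hjk : j ≤ k - 3 := hj
    by_cases hcase : j + 2 ≤ k - 2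
    · exact hnadj 0 (j + 2) (by omega) (by omega) (by omega)
        (by rw [hmodlt _ (by omega)]; omega) (by rw [hmodlt _ (by omega)]; omega)
        ((hept _ _).mpr ⟨hne 0 (j + 2) (by omega) (by omega) (by omega), ⟨e, he0, hej'⟩⟩)
    · have hm : j + 2 = k - 1 := by omega
      rw [hm] at hej'
      exact hnadj 1 (k - 1) (by omega) (by omega) (by omega)
        (by rw [hmodlt _ (by omega)]; omega)
        (by rw [show k - 1 + 1 = k by omega, Nat.mod_self]; omega)
        ((hept _ _).mpr ⟨hne 1 (k - 1) (by omega) (by omega) (by omega), ⟨e, he1, hej'⟩⟩)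
  exact main hTa (hrep.path (w 0)) (hrep.path (w 1)) (hrep.sub _) (hrep.sub _)
    hns.1 hns.2 hRcon hRT ha1 ha0 haR hb0 hb1 hbR hdisj

end Stmt0Aux

/-- no hole of `G` with at least 4 vertices contains an edge of `G'`. -/
theorem stmt0 {β V : Type} [Fintype β] [Fintype V]
    (T : SubG β) (Ps : V → SubG β) (G G' : SimpleGraph V) (hle : G' ≤ G)
    (hrep : IsRep T Ps G G') (k : ℕ) (hk : 4 ≤ k) (v : ZMod k → V)
    (hinj : Function.Injective v)
    (hadj : ∀ i : ZMod k, G.Adj (v i) (v (i + 1)))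
    (hchord : ∀ i j : ZMod k, i ≠ j → j ≠ i + 1 → i ≠ j + 1 → ¬ G.Adj (v i) (v j)) :
    ∀ i : ZMod k, ¬ G'.Adj (v i) (v (i + 1)) := by
  intro i hG'
  haveI : NeZero k := ⟨by omega⟩
  have cast_inj : ∀ {m1 m2 : ℕ}, m1 < k → m2 < k → ((m1 : ZMod k) = (m2 : ZMod k)) → m1 = m2 := by
    intro m1 m2 h1 h2 h
    have := congrArg ZMod.val h
    rwa [ZMod.val_cast_of_lt h1, ZMod.val_cast_of_lt h2] at this
  set w : ℕ → V := fun m => v (i + (m : ZMod k)) with hw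
  have hcastsucc : ∀ m : ℕ, ((m + 1 : ℕ) : ZMod k) = (m : ZMod k) + 1 := by
    intro m; push_cast; ring
  have hadjw : ∀ m : ℕ, G.Adj (w m) (w (m + 1)) := by
    intro m
    show G.Adj (v (i + (m : ZMod k))) (v (i + ((m + 1 : ℕ) : ZMod k)))
    rw [hcastsucc m, ← add_assoc]
    exact hadj (i + (m : ZMod k))
  have hwk : w k = w 0 := by
    show v (i + ((k : ℕ) : ZMod k)) = v (i + ((0 : ℕ) : ZMod k))
    rw [ZMod.natCast_self, Nat.cast_zero]
  have hne : ∀ m1 m2 : ℕ, m1 < k → m2 < k → m1 ≠ m2 → w m1 ≠ w m2 := by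
    intro m1 m2 h1 h2 h hww
    exact h (cast_inj h1 h2 (add_left_cancel (hinj hww)))
  have hcastmod : ∀ m : ℕ, ((m % k : ℕ) : ZMod k) = (m : ZMod k) := by
    intro m
    conv_rhs => rw [← Nat.mod_add_div m k]
    push_cast
    rw [ZMod.natCast_self]
    ring
  have hnadj : ∀ m1 m2 : ℕ, m1 < k → m2 < k → m1 ≠ m2 → (m1 + 1) % k ≠ m2 → (m2 + 1) % k ≠ m1 →
      ¬ G.Adj (w m1) (w m2) := by
    intro m1 m2 h1 h2 h12 hA hB
    refine hchord _ _ ?_ ?_ ?_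
    · intro h
      exact h12 (cast_inj h1 h2 (add_left_cancel h))
    · intro h
      rw [add_assoc, ← hcastsucc] at h
      have h' : ((m2 : ℕ) : ZMod k) = (((m1 + 1) % k : ℕ) : ZMod k) := by
        rw [hcastmod]
        exact add_left_cancel h
      exact hA (cast_inj h2 (Nat.mod_lt _ (by omega)) h').symm
    · intro h
      rw [add_assoc, ← hcastsucc] at h
      have h' : ((m1 : ℕ) : ZMod k) = (((m2 + 1) % k : ℕ) : ZMod k) := by
        rw [hcastmod]
        exact add_left_cancel h
      exact hB (cast_inj h1 (Nat.mod_lt _ (by omega)) h').symm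
  have hG'w : G'.Adj (w 0) (w 1) := by
    show G'.Adj (v (i + ((0 : ℕ) : ZMod k))) (v (i + ((1 : ℕ) : ZMod k)))
    rw [Nat.cast_zero, Nat.cast_one, add_zero]
    exact hG'
  exact stmt0_aux hrep k hk w hadjw hwk hne hnadj hG'w


end ENPT
end

section
/- Let ⟨T_1,𝒫_1⟩, …, ⟨T_n,𝒫_n⟩ be representations with path families indexed by a common finite vertex set V, such that for each i the representation ⟨T_{i+1},𝒫_{i+1}⟩ is obtained from ⟨T_i,𝒫_i⟩ by a finite sequence of minifying operations. If EPT(T_1,𝒫_1) = EPT(T_n,𝒫_n) and ENPT(T_1,𝒫_1) = ENPT(T_n,𝒫_n), then for every i, EPT(T_i,𝒫_i) = EPT(T_1,𝒫_1) and ENPT(T_i,𝒫_i) = ENPT(T_1,𝒫_1). -/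
open SimpleGraph

namespace ENPT

variable {β V W U : Type}

section Aux
variable {β V : Type}

lemma subAdj_ne {H : SubG β} {x y : β} (h : H.Adj x y) : x ≠ y := by
  have := H.adj_sub h; simpa using this

variable [DecidableEq β]

lemma mergeMap_a (a b : β) : mergeMap a b a = a := by
  unfold mergeMap; split <;> rfl

lemma mergeMap_b (a b : β) : mergeMap a b b = a := by simp [mergeMap]

lemma mergeMap_ne {a b x : β} (h : x ≠ b) : mergeMap a b x = x := if_neg h

lemma mergeMap_eq_cases {a b x y : β} (h : mergeMap a b x = mergeMap a b y) :
    x = y ∨ (x = a ∧ y = b) ∨ (x = b ∧ y = a) := by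
  by_cases hx : x = b <;> by_cases hy : y = b
  · left; rw [hx, hy]
  · subst hx; rw [mergeMap_b, mergeMap_ne hy] at h; right; right; exact ⟨rfl, h.symm⟩
  · subst hy; rw [mergeMap_b, mergeMap_ne hx] at h; right; left; exact ⟨h, rfl⟩
  · rw [mergeMap_ne hx, mergeMap_ne hy] at h; left; exact h

lemma mergeMap_ne_b {a b x : β} (hab : a ≠ b) : mergeMap a b x ≠ b := by
  unfold mergeMap; split
  · exact hab
  · assumption

omit [DecidableEq β] in
lemma noTriangle {T : SubG β} (hT : T.coe.IsAcyclic) {a b z : β}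
    (hab : T.Adj a b) (haz : T.Adj a z) (hbz : T.Adj b z) : False := by
  have hab' := hab.coe
  have hbr := (SimpleGraph.isBridge_iff_adj_and_forall_walk_mem_edges.mp
    (SimpleGraph.isAcyclic_iff_forall_adj_isBridge.mp hT hab'))
  have haz' : T.coe.Adj ⟨a, T.edge_vert hab⟩ ⟨z, T.edge_vert haz.symm⟩ := haz
  have hzb' : T.coe.Adj ⟨z, T.edge_vert haz.symm⟩ ⟨b, T.edge_vert hab.symm⟩ := hbz.symm
  have := hbr (SimpleGraph.Walk.cons haz' (SimpleGraph.Walk.cons hzb' SimpleGraph.Walk.nil))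
  have hne1 := subAdj_ne hab
  have hne2 := subAdj_ne haz
  have hne3 := subAdj_ne hbz
  simp [Sym2.eq_iff, Subtype.ext_iff] at this
  tauto

end Aux
section Aux2
variable {β V : Type} [DecidableEq β]

omit [DecidableEq β] in
lemma sym2_ab {a b p q : β} (hp : p = a ∨ p = b) (hq : q = a ∨ q = b) (hne : p ≠ q) :
    s(p, q) = s(a, b) := by
  rcases hp with rfl | rfl <;> rcases hq with rfl | rfl
  · exact absurd rfl hne
  · rfl
  · exact Sym2.eq_swap
  · exact absurd rfl hne

lemma quad {T P Q : SubG β} (hT : T.coe.IsAcyclic) {a b : β} (hab : T.Adj a b)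
    (hP : P ≤ T) (hQ : Q ≤ T) {x₁ y₁ x₂ y₂ : β}
    (h₁ : P.Adj x₁ y₁) (h₂ : Q.Adj x₂ y₂)
    (hx : mergeMap a b x₁ = mergeMap a b x₂) (hy : mergeMap a b y₁ = mergeMap a b y₂) :
    (x₁ = x₂ ∧ y₁ = y₂) ∨ (s(x₁, y₁) = s(a, b) ∧ s(x₂, y₂) = s(a, b)) := by
  have t₁ : T.Adj x₁ y₁ := hP.2 h₁
  have t₂ : T.Adj x₂ y₂ := hQ.2 h₂
  rcases mergeMap_eq_cases hx with hxc | hxc | hxc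
  · rcases mergeMap_eq_cases hy with hyc | hyc | hyc
    · exact Or.inl ⟨hxc, hyc⟩
    · -- x₁ = x₂, y₁ = a, y₂ = b
      by_cases hx1 : x₁ = a ∨ x₁ = b
      · refine Or.inr ⟨sym2_ab hx1 (Or.inl hyc.1) (subAdj_ne t₁),
          sym2_ab (hxc ▸ hx1) (Or.inr hyc.2) (subAdj_ne t₂)⟩
      · rw [hyc.1] at t₁; rw [← hxc, hyc.2] at t₂
        exact absurd (noTriangle hT hab t₁.symm t₂.symm) id
    · by_cases hx1 : x₁ = a ∨ x₁ = b
      · refine Or.inr ⟨sym2_ab hx1 (Or.inr hyc.1) (subAdj_ne t₁),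
          sym2_ab (hxc ▸ hx1) (Or.inl hyc.2) (subAdj_ne t₂)⟩
      · rw [hyc.1] at t₁; rw [← hxc, hyc.2] at t₂
        exact absurd (noTriangle hT hab t₂.symm t₁.symm) id
  · -- x₁ = a, x₂ = b
    rcases mergeMap_eq_cases hy with hyc | hyc | hyc
    · by_cases hy1 : y₁ = a ∨ y₁ = b
      · refine Or.inr ⟨sym2_ab (Or.inl hxc.1) hy1 (subAdj_ne t₁),
          sym2_ab (Or.inr hxc.2) (hyc ▸ hy1) (subAdj_ne t₂)⟩
      · rw [hxc.1] at t₁; rw [hxc.2, ← hyc] at t₂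
        exact absurd (noTriangle hT hab t₁ t₂) id
    · rw [hxc.1, hyc.1] at t₁
      exact absurd rfl (subAdj_ne t₁)
    · exact Or.inr ⟨sym2_ab (Or.inl hxc.1) (Or.inr hyc.1) (subAdj_ne t₁),
        sym2_ab (Or.inr hxc.2) (Or.inl hyc.2) (subAdj_ne t₂)⟩
  · -- x₁ = b, x₂ = a
    rcases mergeMap_eq_cases hy with hyc | hyc | hyc
    · by_cases hy1 : y₁ = a ∨ y₁ = b
      · refine Or.inr ⟨sym2_ab (Or.inr hxc.1) hy1 (subAdj_ne t₁),
          sym2_ab (Or.inl hxc.2) (hyc ▸ hy1) (subAdj_ne t₂)⟩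
      · rw [hxc.1] at t₁; rw [hxc.2, ← hyc] at t₂
        exact absurd (noTriangle hT hab t₂ t₁) id
    · exact Or.inr ⟨sym2_ab (Or.inr hxc.1) (Or.inl hyc.1) (subAdj_ne t₁),
        sym2_ab (Or.inl hxc.2) (Or.inr hyc.2) (subAdj_ne t₂)⟩
    · rw [hxc.1, hyc.1] at t₁
      exact absurd rfl (subAdj_ne t₁)

omit [DecidableEq β] in
lemma adj_of_conn {T H : SubG β} (hT : T.coe.IsAcyclic) (hle : H ≤ T)
    (hH : H.Connected) {a b : β} (ha : a ∈ H.verts) (hb : b ∈ H.verts)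
    (hab : T.Adj a b) : H.Adj a b := by
  obtain ⟨p⟩ := hH.coe ⟨a, ha⟩ ⟨b, hb⟩
  have hbr := (SimpleGraph.isBridge_iff_adj_and_forall_walk_mem_edges.mp
    (SimpleGraph.isAcyclic_iff_forall_adj_isBridge.mp hT
      (show T.coe.Adj ⟨a, hle.1 ha⟩ ⟨b, hle.1 hb⟩ from hab)))
  have hmem := hbr (p.map (SimpleGraph.Subgraph.inclusion hle))
  erw [SimpleGraph.Walk.edges_map, List.mem_map] at hmem
  obtain ⟨e, he, hmap⟩ := hmem
  induction e using Sym2.ind with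
  | _ c d =>
    have hcd : H.coe.Adj c d := p.adj_of_mem_edges he
    rw [Sym2.map_pair_eq, Sym2.eq_iff] at hmap
    have hcd' : H.Adj c.val d.val := hcd
    rcases hmap with ⟨h1, h2⟩ | ⟨h1, h2⟩
    · have e1 : c.val = a := congrArg Subtype.val h1
      have e2 : d.val = b := congrArg Subtype.val h2
      rw [← e1, ← e2]; exact hcd'
    · have e1 : c.val = b := congrArg Subtype.val h1
      have e2 : d.val = a := congrArg Subtype.val h2
      rw [← e1, ← e2]; exact hcd'.symm

end Aux2
section Aux3
variable {β V : Type} [DecidableEq β]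

lemma cImage_adj {a b : β} {H : SubG β} {x y : β} :
    (cImage a b H).Adj x y ↔ x ≠ y ∧
      ∃ x' y', H.Adj x' y' ∧ x = mergeMap a b x' ∧ y = mergeMap a b y' := Iff.rfl

lemma cImage_verts {a b : β} {H : SubG β} :
    (cImage a b H).verts = mergeMap a b '' H.verts := rfl

lemma cImage_mono {a b : β} {H K : SubG β} (h : H ≤ K) :
    cImage a b H ≤ cImage a b K := by
  constructor
  · exact Set.image_mono h.1
  · rintro x y ⟨hne, x', y', hadj, rfl, rfl⟩
    exact ⟨hne, x', y', h.2 hadj, rfl, rfl⟩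

lemma cImage_sup {a b : β} {P Q : SubG β} :
    cImage a b (P ⊔ Q) = cImage a b P ⊔ cImage a b Q := by
  apply SimpleGraph.Subgraph.ext
  · simp [cImage_verts, Set.image_union, SimpleGraph.Subgraph.verts_sup]
  · ext x y
    simp only [cImage_adj, SimpleGraph.Subgraph.sup_adj]
    constructor
    · rintro ⟨hne, x', y', hadj | hadj, rfl, rfl⟩
      · exact Or.inl ⟨hne, x', y', hadj, rfl, rfl⟩
      · exact Or.inr ⟨hne, x', y', hadj, rfl, rfl⟩
    · rintro (⟨hne, x', y', hadj, rfl, rfl⟩ | ⟨hne, x', y', hadj, rfl, rfl⟩)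
      · exact ⟨hne, x', y', Or.inl hadj, rfl, rfl⟩
      · exact ⟨hne, x', y', Or.inr hadj, rfl, rfl⟩

lemma cImage_connected {a b : β} {H : SubG β} (h : H.Connected) :
    (cImage a b H).Connected := by
  have hreach : ∀ {s t : H.verts} (_ : H.coe.Walk s t),
      (cImage a b H).coe.Reachable
        ⟨mergeMap a b s.val, Set.mem_image_of_mem _ s.2⟩
        ⟨mergeMap a b t.val, Set.mem_image_of_mem _ t.2⟩ := by
    intro s t w
    induction w with
    | nil => rfl
    | @cons s u t h' w ih =>
      refine SimpleGraph.Reachable.trans ?_ ih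
      by_cases heq : mergeMap a b s.val = mergeMap a b u.val
      · rw [show (⟨mergeMap a b s.val, Set.mem_image_of_mem _ s.2⟩ :
            (cImage a b H).verts) = ⟨mergeMap a b u.val, Set.mem_image_of_mem _ u.2⟩
            from Subtype.ext heq]
      · exact SimpleGraph.Adj.reachable
          (show (cImage a b H).Adj _ _ from ⟨heq, s.val, u.val, h', rfl, rfl⟩)
  rw [SimpleGraph.Subgraph.connected_iff] at h ⊢
  obtain ⟨hpre, ⟨v, hv⟩⟩ := h
  refine ⟨?_, ⟨mergeMap a b v, Set.mem_image_of_mem _ hv⟩⟩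
  rw [SimpleGraph.Subgraph.preconnected_iff]
  rintro ⟨x, x', hx', rfl⟩ ⟨y, y', hy', rfl⟩
  obtain ⟨w⟩ := hpre.coe ⟨x', hx'⟩ ⟨y', hy'⟩
  exact hreach w

end Aux3
section Aux4
variable {β V : Type} [DecidableEq β] [Fintype β]

lemma cImage_nb_ne_a {a b : β} {H : SubG β} {w : β} (hw : w ≠ a) :
    (cImage a b H).neighborSet w ⊆ mergeMap a b '' H.neighborSet w := by
  rintro y ⟨hne, x', y', hadj, hx, rfl⟩
  have hx' : x' = w := by
    by_cases hb : x' = b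
    · rw [hb, mergeMap_b] at hx; exact absurd hx hw
    · rw [mergeMap_ne hb] at hx; exact hx.symm
  rw [hx'] at hadj
  exact Set.mem_image_of_mem _ hadj

lemma cImage_nb_a {a b : β} (hab : a ≠ b) {H : SubG β} :
    (cImage a b H).neighborSet a ⊆
      mergeMap a b '' ((H.neighborSet a ∪ H.neighborSet b) \ {a, b}) := by
  rintro y ⟨hne, x', y', hadj, hx, rfl⟩
  have hy' : y' ∉ ({a, b} : Set β) := by
    rintro (rfl | rfl)
    · rw [mergeMap_a] at hne; exact hne rfl
    · rw [mergeMap_b] at hne; exact hne rfl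
  have hx' : x' = a ∨ x' = b := by
    by_cases hb : x' = b
    · exact Or.inr hb
    · rw [mergeMap_ne hb] at hx; exact Or.inl hx.symm
  refine Set.mem_image_of_mem _ ⟨?_, hy'⟩
  rcases hx' with rfl | rfl
  · exact Or.inl hadj
  · exact Or.inr hadj

lemma cImage_deg_le {a b : β} (hab : a ≠ b) {H : SubG β}
    (hor : H.Adj a b ∨ H.neighborSet a = ∅ ∨ H.neighborSet b = ∅)
    (hdeg : ∀ w, (H.neighborSet w).ncard ≤ 2) :
    ∀ w, ((cImage a b H).neighborSet w).ncard ≤ 2 := by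
  intro w
  by_cases hw : w = a
  · subst hw
    rcases hor with hadj | hA | hB
    · have hsub : (H.neighborSet w ∪ H.neighborSet b) \ {w, b} ⊆
          (H.neighborSet w \ {b}) ∪ (H.neighborSet b \ {w}) := by
        rintro z ⟨hz | hz, hzn⟩
        · exact Or.inl ⟨hz, fun h => hzn (Or.inr h)⟩
        · exact Or.inr ⟨hz, fun h => hzn (Or.inl h)⟩
      calc ((cImage w b H).neighborSet w).ncard
          ≤ (mergeMap w b '' ((H.neighborSet w ∪ H.neighborSet b) \ {w, b})).ncard :=
            Set.ncard_le_ncard (cImage_nb_a hab) (Set.toFinite _)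
        _ ≤ (((H.neighborSet w ∪ H.neighborSet b) \ {w, b})).ncard :=
            Set.ncard_image_le (Set.toFinite _)
        _ ≤ ((H.neighborSet w \ {b}) ∪ (H.neighborSet b \ {w})).ncard :=
            Set.ncard_le_ncard hsub (Set.toFinite _)
        _ ≤ (H.neighborSet w \ {b}).ncard + (H.neighborSet b \ {w}).ncard :=
            Set.ncard_union_le _ _
        _ ≤ 1 + 1 := by
            have h1 : (H.neighborSet w \ {b}).ncard = (H.neighborSet w).ncard - 1 :=
              Set.ncard_diff_singleton_of_mem hadj
            have h2 : (H.neighborSet b \ {w}).ncard = (H.neighborSet b).ncard - 1 :=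
              Set.ncard_diff_singleton_of_mem hadj.symm
            have := hdeg w; have := hdeg b
            omega
        _ ≤ 2 := le_refl 2
    · calc ((cImage w b H).neighborSet w).ncard
          ≤ (mergeMap w b '' ((H.neighborSet w ∪ H.neighborSet b) \ {w, b})).ncard :=
            Set.ncard_le_ncard (cImage_nb_a hab) (Set.toFinite _)
        _ ≤ ((H.neighborSet w ∪ H.neighborSet b) \ {w, b}).ncard :=
            Set.ncard_image_le (Set.toFinite _)
        _ ≤ (H.neighborSet b).ncard := by
            refine Set.ncard_le_ncard ?_ (Set.toFinite _)
            rintro z ⟨hz | hz, _⟩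
            · rw [hA] at hz; exact absurd hz (Set.notMem_empty z)
            · exact hz
        _ ≤ 2 := hdeg b
    · calc ((cImage w b H).neighborSet w).ncard
          ≤ (mergeMap w b '' ((H.neighborSet w ∪ H.neighborSet b) \ {w, b})).ncard :=
            Set.ncard_le_ncard (cImage_nb_a hab) (Set.toFinite _)
        _ ≤ ((H.neighborSet w ∪ H.neighborSet b) \ {w, b}).ncard :=
            Set.ncard_image_le (Set.toFinite _)
        _ ≤ (H.neighborSet w).ncard := by
            refine Set.ncard_le_ncard ?_ (Set.toFinite _)
            rintro z ⟨hz | hz, _⟩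
            · exact hz
            · rw [hB] at hz; exact absurd hz (Set.notMem_empty z)
        _ ≤ 2 := hdeg w
  · calc ((cImage a b H).neighborSet w).ncard
        ≤ (mergeMap a b '' H.neighborSet w).ncard :=
          Set.ncard_le_ncard (cImage_nb_ne_a hw) (Set.toFinite _)
      _ ≤ (H.neighborSet w).ncard := Set.ncard_image_le (Set.toFinite _)
      _ ≤ 2 := hdeg w

end Aux4
section Aux5
variable {β V : Type} [DecidableEq β] [Fintype β]

lemma split_eq_empty_iff {P Q : SubG β} :
    Split P Q = ∅ ↔ ∀ w, (((P ⊔ Q).neighborSet w).ncard ≤ 2) := by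
  constructor
  · intro h w
    by_contra hc
    have : w ∈ Split P Q := by simp only [Split, Set.mem_setOf_eq]; omega
    rw [h] at this; exact Set.notMem_empty _ this
  · intro h
    ext w
    simp only [Split, Set.mem_setOf_eq, Set.mem_empty_iff_false, iff_false, not_le]
    have := h w; omega

lemma split_mono {P P' Q Q' : SubG β} (hP : P' ≤ P) (hQ : Q' ≤ Q)
    (h : Split P Q = ∅) : Split P' Q' = ∅ := by
  rw [split_eq_empty_iff] at h ⊢
  intro w
  refine le_trans (Set.ncard_le_ncard ?_ (Set.toFinite _)) (h w)
  intro z hz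
  rcases hz with hz | hz
  · exact Or.inl (hP.2 hz)
  · exact Or.inr (hQ.2 hz)

omit [DecidableEq β] [Fintype β] in
lemma edgeInt_mono {P P' Q Q' : SubG β} (hP : P' ≤ P) (hQ : Q' ≤ Q) :
    EdgeInt P' Q' → EdgeInt P Q := by
  rintro ⟨e, he1, he2⟩
  exact ⟨e, SimpleGraph.Subgraph.edgeSet_mono hP he1,
    SimpleGraph.Subgraph.edgeSet_mono hQ he2⟩

lemma edgeInt_cImage {T P Q : SubG β} (hT : T.coe.IsAcyclic) {a b : β}
    (hab : T.Adj a b) (hP : P ≤ T) (hQ : Q ≤ T)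
    (h : EdgeInt (cImage a b P) (cImage a b Q)) : EdgeInt P Q := by
  obtain ⟨e, he1, he2⟩ := h
  induction e using Sym2.ind with
  | _ x y =>
    rw [SimpleGraph.Subgraph.mem_edgeSet] at he1 he2
    obtain ⟨hne, x₁, y₁, h₁, hx1, hy1⟩ := he1
    obtain ⟨-, x₂, y₂, h₂, hx2, hy2⟩ := he2
    rcases quad hT hab hP hQ h₁ h₂ (hx1 ▸ hx2) (hy1 ▸ hy2) with ⟨rfl, rfl⟩ | ⟨hq1, hq2⟩
    · exact ⟨s(x₁, y₁), SimpleGraph.Subgraph.mem_edgeSet.mpr h₁,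
        SimpleGraph.Subgraph.mem_edgeSet.mpr h₂⟩
    · refine ⟨s(a, b), ?_, ?_⟩
      · rw [← hq1]; exact SimpleGraph.Subgraph.mem_edgeSet.mpr h₁
      · rw [← hq2]; exact SimpleGraph.Subgraph.mem_edgeSet.mpr h₂

lemma split_empty_cImage {T P Q : SubG β} (hT : T.coe.IsAcyclic) {a b : β}
    (hab : T.Adj a b) (hP : P ≤ T) (hQ : Q ≤ T)
    (hPc : P.Connected) (hQc : Q.Connected) (hint : EdgeInt P Q)
    (hsp : Split P Q = ∅) : Split (cImage a b P) (cImage a b Q) = ∅ := by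
  have habne : a ≠ b := subAdj_ne hab
  set H := P ⊔ Q with hH
  have hHle : H ≤ T := sup_le hP hQ
  have hHconn : H.Connected := by
    obtain ⟨e, he1, he2⟩ := hint
    induction e using Sym2.ind with
    | _ x y =>
      refine SimpleGraph.Subgraph.connected_sup hPc.preconnected hQc.preconnected ⟨x, ?_⟩
      rw [SimpleGraph.Subgraph.mem_edgeSet] at he1 he2
      exact ⟨P.edge_vert he1, Q.edge_vert he2⟩
  have hdeg : ∀ w, (H.neighborSet w).ncard ≤ 2 := split_eq_empty_iff.mp hsp
  have hor : H.Adj a b ∨ H.neighborSet a = ∅ ∨ H.neighborSet b = ∅ := by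
    by_cases hA : H.neighborSet a = ∅
    · exact Or.inr (Or.inl hA)
    by_cases hB : H.neighborSet b = ∅
    · exact Or.inr (Or.inr hB)
    left
    obtain ⟨za, hza⟩ := Set.nonempty_iff_ne_empty.mpr hA
    obtain ⟨zb, hzb⟩ := Set.nonempty_iff_ne_empty.mpr hB
    exact adj_of_conn hT hHle hHconn (H.edge_vert hza) (H.edge_vert hzb) hab
  have := cImage_deg_le habne hor hdeg
  rw [split_eq_empty_iff]
  intro w
  rw [← cImage_sup]
  exact this w

end Aux5
section Aux6
variable {β V : Type} [DecidableEq β]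

/-- Walks between merged preimages, using only the edge `ab`. -/
lemma conn2 {T : SubG β} {a b : β} (hab : T.Adj a b) {x' y' : β}
    (hx' : x' ∈ T.verts) (hy' : y' ∈ T.verts)
    (h : mergeMap a b x' = mergeMap a b y') :
    ∃ W : T.coe.Walk ⟨x', hx'⟩ ⟨y', hy'⟩,
      ∀ e ∈ W.edges, Sym2.map Subtype.val e = s(a, b) := by
  rcases mergeMap_eq_cases h with rfl | ⟨rfl, rfl⟩ | ⟨rfl, rfl⟩
  · exact ⟨SimpleGraph.Walk.nil.copy rfl (Subtype.ext rfl), by simp⟩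
  · refine ⟨SimpleGraph.Walk.cons (show T.coe.Adj ⟨x', hx'⟩ ⟨y', hy'⟩ from hab)
      SimpleGraph.Walk.nil, ?_⟩
    intro e he
    simp only [SimpleGraph.Walk.edges_cons, SimpleGraph.Walk.edges_nil,
      List.mem_cons, List.not_mem_nil, or_false] at he
    subst he
    rw [Sym2.map_pair_eq]
  · refine ⟨SimpleGraph.Walk.cons (show T.coe.Adj ⟨x', hx'⟩ ⟨y', hy'⟩ from hab.symm)
      SimpleGraph.Walk.nil, ?_⟩
    intro e he
    simp only [SimpleGraph.Walk.edges_cons, SimpleGraph.Walk.edges_nil,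
      List.mem_cons, List.not_mem_nil, or_false] at he
    subst he
    rw [Sym2.map_pair_eq]
    exact Sym2.eq_swap

lemma lift_walk {T : SubG β} (hT : T.coe.IsAcyclic) {a b : β} (hab : T.Adj a b)
    {x₁ y₁ : β} (hne : s(x₁, y₁) ≠ s(a, b))
    {x y : (cImage a b T).verts} (p : (cImage a b T).coe.Walk x y)
    (hp : ∀ e ∈ p.edges, Sym2.map Subtype.val e ≠ s(mergeMap a b x₁, mergeMap a b y₁))
    {x' y' : β} (hx' : x' ∈ T.verts) (hy' : y' ∈ T.verts)
    (hmx : mergeMap a b x' = x.val) (hmy : mergeMap a b y' = y.val) :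
    ∃ W : T.coe.Walk ⟨x', hx'⟩ ⟨y', hy'⟩,
      ∀ e ∈ W.edges, Sym2.map Subtype.val e ≠ s(x₁, y₁) := by
  induction p generalizing x' y' with
  | nil =>
    obtain ⟨W, hW⟩ := conn2 hab hx' hy' (by rw [hmx, hmy])
    exact ⟨W, fun e he h => hne (h.symm.trans (hW e he))⟩
  | @cons xx zz yy h q ih =>
    obtain ⟨hnexz, p₁, q₁, hT1, hxp, hzq⟩ := (show (cImage a b T).Adj xx.val zz.val from h)
    have hq1 : q₁ ∈ T.verts := T.edge_vert hT1.symm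
    have hp1 : p₁ ∈ T.verts := T.edge_vert hT1
    have hhead : Sym2.map Subtype.val (s(xx, zz) : Sym2 ((cImage a b T).verts))
        ≠ s(mergeMap a b x₁, mergeMap a b y₁) :=
      hp _ (by rw [SimpleGraph.Walk.edges_cons]; exact List.mem_cons_self)
    have hedge : s(p₁, q₁) ≠ s(x₁, y₁) := by
      intro hcontra
      apply hhead
      rw [Sym2.map_pair_eq, hxp, hzq, ← Sym2.map_pair_eq (mergeMap a b),
        ← Sym2.map_pair_eq (mergeMap a b), hcontra]
    obtain ⟨W₁, hW₁⟩ := conn2 hab hx' hp1 (by rw [hmx, hxp])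
    have hptail : ∀ e ∈ q.edges, Sym2.map Subtype.val e
        ≠ s(mergeMap a b x₁, mergeMap a b y₁) := by
      intro e he
      refine hp e ?_
      rw [SimpleGraph.Walk.edges_cons]
      exact List.mem_cons_of_mem _ he
    obtain ⟨W₂, hW₂⟩ := ih hptail hq1 hy' hzq.symm hmy
    refine ⟨W₁.append (SimpleGraph.Walk.cons
      (show T.coe.Adj ⟨p₁, hp1⟩ ⟨q₁, hq1⟩ from hT1) W₂), ?_⟩
    intro e he
    rw [SimpleGraph.Walk.edges_append, List.mem_append] at he
    rcases he with he | he
    · intro hcontra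
      exact hne (hcontra.symm.trans (hW₁ e he))
    · rw [SimpleGraph.Walk.edges_cons, List.mem_cons] at he
      rcases he with rfl | he
      · rw [Sym2.map_pair_eq]; exact hedge
      · exact hW₂ e he

lemma cImage_acyclic {T : SubG β} (hT : T.coe.IsAcyclic) {a b : β}
    (hab : T.Adj a b) : (cImage a b T).coe.IsAcyclic := by
  rw [SimpleGraph.isAcyclic_iff_forall_adj_isBridge]
  intro u v huv
  rw [SimpleGraph.isBridge_iff_adj_and_forall_walk_mem_edges]
  refine fun p => ?_
  by_contra hp
  obtain ⟨hneuv, x₁, y₁, h₁, hu, hv⟩ := (show (cImage a b T).Adj u.val v.val from huv)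
  have hne : s(x₁, y₁) ≠ s(a, b) := by
    intro hcontra
    rw [Sym2.eq_iff] at hcontra
    apply hneuv
    rcases hcontra with ⟨rfl, rfl⟩ | ⟨rfl, rfl⟩
    · rw [hu, hv, mergeMap_a, mergeMap_b]
    · rw [hu, hv, mergeMap_a, mergeMap_b]
  have hp' : ∀ e ∈ p.edges, Sym2.map Subtype.val e
      ≠ s(mergeMap a b x₁, mergeMap a b y₁) := by
    intro e he hcontra
    apply hp
    have : e = s(u, v) := by
      induction e using Sym2.ind with
      | _ c d =>
        rw [Sym2.map_pair_eq, ← hu, ← hv, Sym2.eq_iff] at hcontra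
        rcases hcontra with ⟨h1, h2⟩ | ⟨h1, h2⟩
        · rw [Sym2.eq_iff]; exact Or.inl ⟨Subtype.ext h1, Subtype.ext h2⟩
        · rw [Sym2.eq_iff]; exact Or.inr ⟨Subtype.ext h1, Subtype.ext h2⟩
    rw [← this]; exact he
  obtain ⟨W, hW⟩ := lift_walk hT hab hne p hp' (T.edge_vert h₁)
    (T.edge_vert h₁.symm) hu.symm hv.symm
  have hbr := (SimpleGraph.isBridge_iff_adj_and_forall_walk_mem_edges.mp
    (SimpleGraph.isAcyclic_iff_forall_adj_isBridge.mp hT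
      (show T.coe.Adj ⟨x₁, T.edge_vert h₁⟩ ⟨y₁, T.edge_vert h₁.symm⟩ from h₁)))
  exact hW _ (hbr W) (by rw [Sym2.map_pair_eq])

end Aux6
section Aux7
variable {β V : Type} [DecidableEq β]

lemma delTail_le {x : β} {P : SubG β} : delTail x P ≤ P :=
  ⟨Set.diff_subset, @fun _ _ h => h.1⟩

lemma internal_two_nbrs {γ : Type*} {G : SimpleGraph γ} {u v : γ}
    (p : G.Walk u v) (hp : p.IsPath) {z : γ} (hz : z ∈ p.support)
    (hzu : z ≠ u) (hzv : z ≠ v) : ∃ s t, G.Adj z s ∧ G.Adj z t ∧ s ≠ t := by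
  induction p with
  | nil => simp at hz; exact absurd hz hzu
  | @cons u w v h q ih =>
    rw [SimpleGraph.Walk.support_cons, List.mem_cons] at hz
    rcases hz with rfl | hz
    · exact absurd rfl hzu
    rw [SimpleGraph.Walk.cons_isPath_iff] at hp
    by_cases hzw : z = w
    · subst hzw
      cases q with
      | nil => exact absurd rfl hzv
      | cons h' q' =>
        refine ⟨u, _, h.symm, h', ?_⟩
        intro hcontra
        apply hp.2
        rw [hcontra, SimpleGraph.Walk.support_cons]
        exact List.mem_cons_of_mem _ (SimpleGraph.Walk.start_mem_support q')
    · exact ih hp.1 hz hzw hzv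

lemma avoid_lift {P : SubG β} {x : β} {s t : P.verts}
    (w : P.coe.Walk s t) (h : ∀ z ∈ w.support, z.val ≠ x) :
    (delTail x P).coe.Reachable
      ⟨s.val, ⟨s.2, h s w.start_mem_support⟩⟩
      ⟨t.val, ⟨t.2, h t w.end_mem_support⟩⟩ := by
  induction w with
  | nil => rfl
  | @cons s u t hadj q ih =>
    have hs : s.val ≠ x := h s (SimpleGraph.Walk.start_mem_support _)
    have hu : u.val ≠ x := h u (by
      rw [SimpleGraph.Walk.support_cons]
      exact List.mem_cons_of_mem _ (SimpleGraph.Walk.start_mem_support q))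
    have htail : ∀ z ∈ q.support, z.val ≠ x := fun z hz => h z (by
      rw [SimpleGraph.Walk.support_cons]; exact List.mem_cons_of_mem _ hz)
    have hadj' : (delTail x P).coe.Adj ⟨s.val, ⟨s.2, hs⟩⟩ ⟨u.val, ⟨u.2, hu⟩⟩ :=
      ⟨hadj, hs, hu⟩
    exact SimpleGraph.Reachable.trans hadj'.reachable (ih htail)

lemma delTail_connected [Fintype β] {P : SubG β} (hc : P.Connected) {x y : β}
    (hxy : P.Adj x y) (hdeg : (P.neighborSet x).ncard = 1) :
    (delTail x P).Connected := by
  have hxyne : x ≠ y := subAdj_ne hxy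
  rw [SimpleGraph.Subgraph.connected_iff]
  constructor
  · rw [SimpleGraph.Subgraph.preconnected_iff]
    rintro ⟨u, hu, hux⟩ ⟨v, hv, hvx⟩
    obtain ⟨p⟩ := hc.coe ⟨u, hu⟩ ⟨v, hv⟩
    have hux' : u ≠ x := by simpa using hux
    have hvx' : v ≠ x := by simpa using hvx
    set q := p.toPath with hq
    have havoid : ∀ z ∈ q.val.support, z.val ≠ x := by
      intro z hz hcontra
      have hzu : z ≠ (⟨u, hu⟩ : P.verts) := fun hh => hux'
        (by rw [hh] at hcontra; exact hcontra)
      have hzv : z ≠ (⟨v, hv⟩ : P.verts) := fun hh => hvx'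
        (by rw [hh] at hcontra; exact hcontra)
      obtain ⟨s, t, has, hat, hst⟩ := internal_two_nbrs q.val q.2 hz hzu hzv
      have h1 : s.val ∈ P.neighborSet x := by
        have : P.Adj z.val s.val := has
        rwa [hcontra] at this
      have h2 : t.val ∈ P.neighborSet x := by
        have : P.Adj z.val t.val := hat
        rwa [hcontra] at this
      have hstv : s.val ≠ t.val := fun hh => hst (Subtype.ext hh)
      have : 2 ≤ (P.neighborSet x).ncard := by
        have hsub : {s.val, t.val} ⊆ P.neighborSet x := by
          rintro w (rfl | rfl)
          · exact h1
          · exact h2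
        calc 2 = ({s.val, t.val} : Set β).ncard := (Set.ncard_pair hstv).symm
          _ ≤ (P.neighborSet x).ncard := Set.ncard_le_ncard hsub (Set.toFinite _)
      omega
    exact avoid_lift q.val havoid
  · exact ⟨y, P.edge_vert hxy.symm, by simpa using hxyne.symm⟩

lemma delTail_edges_nonempty [Fintype β] {P : SubG β} {x y : β}
    (hxy : P.Adj x y) (hdeg : (P.neighborSet x).ncard = 1)
    (htwo : 2 ≤ P.edgeSet.ncard) : (delTail x P).edgeSet.Nonempty := by
  have hnb : P.neighborSet x = {y} := by
    obtain ⟨c, hc⟩ := Set.ncard_eq_one.mp hdeg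
    have : y ∈ P.neighborSet x := hxy
    rw [hc] at this ⊢
    rw [Set.mem_singleton_iff] at this
    rw [this]
  have hsub : P.edgeSet ⊆ (delTail x P).edgeSet ∪ {s(x, y)} := by
    intro e he
    induction e using Sym2.ind with
    | _ p q =>
      rw [SimpleGraph.Subgraph.mem_edgeSet] at he
      by_cases hpx : p = x
      · subst hpx
        have : q ∈ P.neighborSet p := he
        rw [hnb, Set.mem_singleton_iff] at this
        subst this
        exact Or.inr rfl
      · by_cases hqx : q = x
        · subst hqx
          have : p ∈ P.neighborSet q := he.symm
          rw [hnb, Set.mem_singleton_iff] at this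
          subst this
          exact Or.inr Sym2.eq_swap
        · exact Or.inl (SimpleGraph.Subgraph.mem_edgeSet.mpr ⟨he, hpx, hqx⟩)
  have hle := Set.ncard_le_ncard hsub (Set.toFinite _)
  rw [Set.union_singleton] at hle
  have := Set.ncard_insert_le (s(x, y)) (delTail x P).edgeSet
  rw [Set.nonempty_iff_ne_empty]
  intro hempty
  rw [hempty] at hle this
  simp only [insert_empty_eq, Set.ncard_singleton, Set.ncard_empty] at hle this
  omega

end Aux7
section Chain
variable {β V : Type} [Fintype β] [Fintype V] [DecidableEq β] [DecidableEq V]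

def Inv (R : Rep β V) : Prop :=
  R.T.coe.IsAcyclic ∧ (∀ v, R.P v ≤ R.T) ∧
    ∀ v, (R.P v).Connected ∧ (R.P v).edgeSet.Nonempty

def Mono (R R' : Rep β V) : Prop :=
  (∀ u v, EdgeInt (R'.P u) (R'.P v) → EdgeInt (R.P u) (R.P v)) ∧
  (∀ u v, NonSplit (R.P u) (R.P v) → EdgeInt (R'.P u) (R'.P v) →
    NonSplit (R'.P u) (R'.P v))

lemma Mono.refl {R : Rep β V} : Mono R R :=
  ⟨fun _ _ h => h, fun _ _ h _ => h⟩

lemma Mono.trans {R R' R'' : Rep β V} (h1 : Mono R R') (h2 : Mono R' R'') :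
    Mono R R'' :=
  ⟨fun u v h => h1.1 u v (h2.1 u v h),
   fun u v hns hei => h2.2 u v (h1.2 u v hns (h2.1 u v hei)) hei⟩

lemma step_key {R R' : Rep β V} (hInv : Inv R) (hstep : MinifyStep R R') :
    Inv R' ∧ Mono R R' := by
  obtain ⟨hac, hle, hpc⟩ := hInv
  cases hstep with
  | contract a b hab hkeep =>
    refine ⟨⟨cImage_acyclic hac hab, fun v => cImage_mono (hle v),
      fun v => ⟨cImage_connected (hpc v).1, hkeep v⟩⟩, ?_, ?_⟩
    · intro u v h
      exact edgeInt_cImage hac hab (hle u) (hle v) h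
    · intro u v hns hei
      exact ⟨hei, split_empty_cImage hac hab (hle u) (hle v)
        (hpc u).1 (hpc v).1 hns.1 hns.2⟩
  | tail v₀ x y hxy hdeg htwo =>
    have hle' : ∀ w, (Function.update R.P v₀ (delTail x (R.P v₀))) w ≤ R.P w := by
      intro w
      by_cases hw : w = v₀
      · subst hw; rw [Function.update_self]; exact delTail_le
      · rw [Function.update_of_ne hw]
    refine ⟨⟨hac, fun w => le_trans (hle' w) (hle w), ?_⟩, ?_, ?_⟩
    · intro w
      dsimp only
      by_cases hw : w = v₀
      · subst hw; rw [Function.update_self]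
        exact ⟨delTail_connected (hpc w).1 hxy hdeg,
          delTail_edges_nonempty hxy hdeg htwo⟩
      · rw [Function.update_of_ne hw]; exact hpc w
    · intro u v h
      exact edgeInt_mono (hle' u) (hle' v) h
    · intro u v hns hei
      exact ⟨hei, split_mono (hle' u) (hle' v) hns.2⟩

lemma rtg_key {R R' : Rep β V} (hInv : Inv R)
    (h : Relation.ReflTransGen MinifyStep R R') : Inv R' ∧ Mono R R' := by
  induction h with
  | refl => exact ⟨hInv, Mono.refl⟩
  | tail _ hstep ih =>
    obtain ⟨hI, hM⟩ := ih
    obtain ⟨hI', hM'⟩ := step_key hI hstep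
    exact ⟨hI', hM.trans hM'⟩

end Chain
/-- if the first and last representations of a chain of minifying operations
have the same EPT and ENPT graphs, then so do all intermediate representations. -/
theorem stmt1 {β V : Type} [Fintype β] [Fintype V] [DecidableEq β] [DecidableEq V]
    (n : ℕ) (hn : 1 ≤ n) (R : ℕ → Rep β V)
    (hwf : ∀ i < n, (R i).WF)
    (hstep : ∀ i, i + 1 < n → Relation.ReflTransGen MinifyStep (R i) (R (i + 1)))
    (hept : EPTg (R (n - 1)).P = EPTg (R 0).P)
    (henpt : ENPTg (R (n - 1)).P = ENPTg (R 0).P) :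
    ∀ i < n, EPTg (R i).P = EPTg (R 0).P ∧ ENPTg (R i).P = ENPTg (R 0).P := by
  have hInv : ∀ i < n, Inv (R i) := by
    intro i hi
    obtain ⟨ht, hs, hp⟩ := hwf i hi
    exact ⟨ht.IsAcyclic, hs, fun v => ⟨(hp v).1, (hp v).2.1⟩⟩
  have hchain : ∀ i j : ℕ, i ≤ j → j < n → Mono (R i) (R j) := by
    intro i j hij
    induction j, hij using Nat.le_induction with
    | base => intro _; exact Mono.refl
    | succ j hij ih =>
      intro hjn
      have hj : j < n := lt_trans (Nat.lt_succ_self j) hjn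
      exact (ih hj).trans (rtg_key (hInv j hj) (hstep j hjn)).2
  intro i hi
  have hn1 : n - 1 < n := Nat.sub_lt (lt_of_lt_of_le Nat.zero_lt_one hn) Nat.zero_lt_one
  have hin1 : i ≤ n - 1 := Nat.le_sub_one_of_lt hi
  have M0i : Mono (R 0) (R i) := hchain 0 i (Nat.zero_le i) hi
  have Min : Mono (R i) (R (n - 1)) := hchain i (n - 1) hin1 hn1
  -- adjacency characterizations of the hypotheses
  have hepta : ∀ u v : V, (u ≠ v ∧ EdgeInt ((R (n-1)).P u) ((R (n-1)).P v)) ↔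
      (u ≠ v ∧ EdgeInt ((R 0).P u) ((R 0).P v)) := by
    intro u v
    exact iff_of_eq (congrFun (congrFun (congrArg SimpleGraph.Adj hept) u) v)
  have henpta : ∀ u v : V, (u ≠ v ∧ NonSplit ((R (n-1)).P u) ((R (n-1)).P v)) ↔
      (u ≠ v ∧ NonSplit ((R 0).P u) ((R 0).P v)) := by
    intro u v
    exact iff_of_eq (congrFun (congrFun (congrArg SimpleGraph.Adj henpt) u) v)
  -- EdgeInt equivalence at index i
  have hEi : ∀ u v : V, u ≠ v →
      (EdgeInt ((R i).P u) ((R i).P v) ↔ EdgeInt ((R 0).P u) ((R 0).P v)) := by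
    intro u v hne
    constructor
    · exact M0i.1 u v
    · intro h0
      have hn1' : EdgeInt ((R (n-1)).P u) ((R (n-1)).P v) :=
        ((hepta u v).mpr ⟨hne, h0⟩).2
      exact Min.1 u v hn1'
  constructor
  · ext u v
    constructor
    · rintro ⟨hne, h⟩
      exact ⟨hne, (hEi u v hne).mp h⟩
    · rintro ⟨hne, h⟩
      exact ⟨hne, (hEi u v hne).mpr h⟩
  · ext u v
    constructor
    · rintro ⟨hne, h⟩
      have ei0 : EdgeInt ((R 0).P u) ((R 0).P v) := M0i.1 u v h.1
      have ein1 : EdgeInt ((R (n-1)).P u) ((R (n-1)).P v) :=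
        ((hepta u v).mpr ⟨hne, ei0⟩).2
      have nsn1 : NonSplit ((R (n-1)).P u) ((R (n-1)).P v) := Min.2 u v h ein1
      exact ⟨hne, ((henpta u v).mp ⟨hne, nsn1⟩).2⟩
    · rintro ⟨hne, h0⟩
      have ein1 : EdgeInt ((R (n-1)).P u) ((R (n-1)).P v) :=
        ((hepta u v).mpr ⟨hne, h0.1⟩).2
      have eii : EdgeInt ((R i).P u) ((R i).P v) := Min.1 u v ein1
      exact ⟨hne, M0i.2 u v h0 eii⟩

end ENPT
end

section
/- Let ⟨T,𝒫⟩ be a representation of a pair (G,G'), and let e = {p,q} ∈ E(G') be contractible in (G,G'). Define the family 𝒫', indexed by the vertex set of G/e (the vertices of G with p and q replaced by the merged vertex pq), by P'_{pq} = P_p ∪ P_q (a path of T, since P_p ∼ P_q) and P'_x = P_x for every other vertex x. Then ⟨T,𝒫'⟩ is a representation of the contracted pair (G/e, G'/e). -/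
open SimpleGraph

namespace ENPT

variable {β V W U : Type}

/-! ### Auxiliary lemmas for `stmt2` -/

lemma mkWalk {T H : SubG β} (hHT : H ≤ T) (hH : H.Connected)
    (x y : T.verts) (hx : (x : β) ∈ H.verts) (hy : (y : β) ∈ H.verts) :
    ∃ w : T.coe.Walk x y, w.IsPath ∧ ∀ e ∈ w.edges, Sym2.map Subtype.val e ∈ H.edgeSet := by
  classical
  obtain ⟨q⟩ := hH.coe ⟨(x:β), hx⟩ ⟨(y:β), hy⟩
  let q' : T.coe.Walk x y := q.map (SimpleGraph.Subgraph.inclusion hHT)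
  refine ⟨q'.bypass, q'.bypass_isPath, ?_⟩
  intro e he
  have he' : e ∈ q'.edges := q'.edges_bypass_subset he
  rw [show q'.edges = _ from Walk.edges_map _ _, List.mem_map] at he'
  obtain ⟨e0, he0, rfl⟩ := he'
  have h1 : e0 ∈ H.coe.edgeSet := q.edges_subset_edgeSet he0
  induction e0 using Sym2.ind with
  | _ a b =>
    rw [SimpleGraph.mem_edgeSet, Subgraph.coe_adj] at h1
    simpa using h1

lemma edges_in_of_isPath {T H : SubG β} (hT : T.coe.IsTree) (hHT : H ≤ T) (hH : H.Connected)
    {x y : T.verts} (hx : (x : β) ∈ H.verts) (hy : (y : β) ∈ H.verts)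
    (w : T.coe.Walk x y) (hw : w.IsPath) :
    ∀ e ∈ w.edges, Sym2.map Subtype.val e ∈ H.edgeSet := by
  obtain ⟨w', hw', hE⟩ := mkWalk hHT hH x y hx hy
  have : w = w' := (hT.existsUnique_path x y).unique hw hw'
  subst this
  exact hE

lemma exists_cons_of_ne {α : Type} {G : SimpleGraph α} {a b : α} (hab : a ≠ b) (p : G.Walk a b) :
    ∃ (c : α) (h : G.Adj a c) (q : G.Walk c b), p = Walk.cons h q :=
  Walk.not_nil_iff.mp (fun hn => hab hn.eq)

lemma exists_adj_of_edgeInt {H K : SubG β} (h : EdgeInt H K) :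
    ∃ x y : β, H.Adj x y ∧ K.Adj x y := by
  obtain ⟨e, h1, h2⟩ := h
  induction e using Sym2.ind with
  | _ x y => exact ⟨x, y, h1, h2⟩

lemma neighborSet_nonempty {H : SubG β} (hH : H.Connected)
    (he : H.edgeSet.Nonempty) {v : β} (hv : v ∈ H.verts) : (H.neighborSet v).Nonempty := by
  obtain ⟨e, he⟩ := he
  induction e using Sym2.ind with
  | _ x y =>
    rw [Subgraph.mem_edgeSet] at he
    by_cases hvx : v = x
    · exact ⟨y, hvx ▸ he⟩
    by_cases hvy : v = y
    · exact ⟨x, hvy ▸ he.symm⟩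
    obtain ⟨q⟩ := hH.coe ⟨v, hv⟩ ⟨x, H.edge_vert he⟩
    obtain ⟨c, hadj, q', rfl⟩ := exists_cons_of_ne (fun h => hvx (congrArg Subtype.val h)) q
    exact ⟨c.val, hadj⟩

lemma ncard_le_of_split_empty [Fintype β] {A C : SubG β}
    (h : Split A C = ∅) (v : β) : ((A ⊔ C).neighborSet v).ncard ≤ 2 := by
  have := Set.eq_empty_iff_forall_notMem.mp h v
  simp only [Split, Set.mem_setOf_eq, not_le] at this
  omega

lemma split_mono_s2 [Fintype β] {A A' C : SubG β} (h : A ≤ A') : Split A C ⊆ Split A' C := by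
  intro v hv
  simp only [Split, Set.mem_setOf_eq] at hv ⊢
  refine le_trans hv (Set.ncard_le_ncard ?_ (Set.toFinite _))
  intro w hw
  rw [Subgraph.mem_neighborSet] at hw ⊢
  rcases (Subgraph.sup_adj.mp hw) with h1 | h2
  · exact Subgraph.sup_adj.mpr (Or.inl (h.2 h1))
  · exact Subgraph.sup_adj.mpr (Or.inr h2)

lemma edgeInt_sup_iff {A B C : SubG β} :
    EdgeInt (A ⊔ B) C ↔ EdgeInt A C ∨ EdgeInt B C := by
  unfold EdgeInt
  rw [Subgraph.edgeSet_sup, Set.union_inter_distrib_right, Set.union_nonempty]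

lemma key [Fintype β] {T Pp Pq Pb : SubG β} (hT : T.coe.IsTree)
    (hpT : Pp ≤ T) (hqT : Pq ≤ T) (hbT : Pb ≤ T)
    (cp : Pp.Connected) (cq : Pq.Connected) (cb : Pb.Connected)
    (epq : EdgeInt Pp Pq) (epb : EdgeInt Pp Pb)
    (spq : Split Pp Pq = ∅) (spb : Split Pp Pb = ∅)
    (nqb : ¬ EdgeInt Pq Pb) : Split (Pp ⊔ Pq) Pb = ∅ := by
  classical
  rw [Set.eq_empty_iff_forall_notMem]
  intro v hv
  simp only [Split, Set.mem_setOf_eq] at hv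
  have hN : (Pp ⊔ Pq ⊔ Pb).neighborSet v
      = Pp.neighborSet v ∪ Pq.neighborSet v ∪ Pb.neighborSet v := by
    rw [Subgraph.neighborSet_sup, Subgraph.neighborSet_sup]
  rw [hN] at hv
  have h2q : (Pp.neighborSet v ∪ Pq.neighborSet v).ncard ≤ 2 := by
    have := ncard_le_of_split_empty spq v
    rwa [Subgraph.neighborSet_sup] at this
  have h2b : (Pp.neighborSet v ∪ Pb.neighborSet v).ncard ≤ 2 := by
    have := ncard_le_of_split_empty spb v
    rwa [Subgraph.neighborSet_sup] at this
  have hu : ∃ u, u ∈ Pq.neighborSet v ∧ u ∉ Pp.neighborSet v ∪ Pb.neighborSet v := by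
    by_contra h
    push_neg at h
    have hsub : Pp.neighborSet v ∪ Pq.neighborSet v ∪ Pb.neighborSet v
        ⊆ Pp.neighborSet v ∪ Pb.neighborSet v := by
      rintro w ((hw | hw) | hw)
      · exact Or.inl hw
      · exact h w hw
      · exact Or.inr hw
    have := Set.ncard_le_ncard hsub (Set.toFinite _)
    omega
  have hw : ∃ u, u ∈ Pb.neighborSet v ∧ u ∉ Pp.neighborSet v ∪ Pq.neighborSet v := by
    by_contra h
    push_neg at h
    have hsub : Pp.neighborSet v ∪ Pq.neighborSet v ∪ Pb.neighborSet v
        ⊆ Pp.neighborSet v ∪ Pq.neighborSet v := by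
      rintro w ((hw | hw) | hw)
      · exact Or.inl hw
      · exact Or.inr hw
      · exact h w hw
    have := Set.ncard_le_ncard hsub (Set.toFinite _)
    omega
  obtain ⟨u, huq, hunotpb⟩ := hu
  obtain ⟨w, hwb, hwnotpq⟩ := hw
  have hvq : v ∈ Pq.verts := Pq.edge_vert huq
  have hvb : v ∈ Pb.verts := Pb.edge_vert hwb
  obtain ⟨x1, y1, h1p, h1q⟩ := exists_adj_of_edgeInt epq
  obtain ⟨x2, y2, h2p, h2b'⟩ := exists_adj_of_edgeInt epb
  by_cases hvp : v ∈ Pp.verts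
  · -- Case B : v lies on the central path Pp
    obtain ⟨s, hs⟩ : (Pp.neighborSet v).Nonempty :=
      neighborSet_nonempty cp ⟨s(x1, y1), h1p⟩ hvp
    have hNp : Pp.neighborSet v = {s} := by
      apply Set.eq_singleton_iff_unique_mem.mpr
      refine ⟨hs, ?_⟩
      intro s' hs'
      by_contra hss
      have hus : u ≠ s := fun h => hunotpb (Or.inl (h ▸ hs))
      have hus' : u ≠ s' := fun h => hunotpb (Or.inl (h ▸ hs'))
      have hsub : ({s, s', u} : Set β) ⊆ Pp.neighborSet v ∪ Pq.neighborSet v := by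
        rintro z (rfl | rfl | rfl)
        · exact Or.inl hs
        · exact Or.inl hs'
        · exact Or.inr huq
      have hcard : ({s, s', u} : Set β).ncard = 3 := by
        rw [Set.ncard_insert_of_notMem (by
          rintro (rfl | rfl)
          · exact hss rfl
          · exact hus rfl), Set.ncard_pair (fun h => hus' h.symm)]
      have := Set.ncard_le_ncard hsub (Set.toFinite _)
      omega
    have C : ∀ (H : SubG β), H ≤ T → H.Connected → v ∈ H.verts →
        (∃ x y : β, Pp.Adj x y ∧ H.Adj x y) → s(v, s) ∈ H.edgeSet := by
      rintro H hHT hHc hvH ⟨x, y, hxyp, hxyH⟩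
      by_cases hvx : v = x
      · subst hvx
        have hy : y ∈ Pp.neighborSet v := hxyp
        rw [hNp, Set.mem_singleton_iff] at hy
        subst hy
        exact Subgraph.mem_edgeSet.mpr hxyH
      by_cases hvy : v = y
      · subst hvy
        have hx' : x ∈ Pp.neighborSet v := hxyp.symm
        rw [hNp, Set.mem_singleton_iff] at hx'
        subst hx'
        exact Subgraph.mem_edgeSet.mpr hxyH.symm
      · have hxp : x ∈ Pp.verts := Pp.edge_vert hxyp
        have hxH : x ∈ H.verts := H.edge_vert hxyH
        obtain ⟨w0, hw0, hEH⟩ := mkWalk hHT hHc ⟨v, hHT.1 hvH⟩ ⟨x, hHT.1 hxH⟩ hvH hxH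
        have hEP := edges_in_of_isPath hT hpT cp (x := ⟨v, hHT.1 hvH⟩) (y := ⟨x, hHT.1 hxH⟩)
          hvp hxp w0 hw0
        obtain ⟨c, hadj, q0, rfl⟩ :=
          exists_cons_of_ne (fun h => hvx (congrArg Subtype.val h)) w0
        have hfe : s((⟨v, hHT.1 hvH⟩ : T.verts), c) ∈ (Walk.cons hadj q0).edges := by
          rw [Walk.edges_cons]; exact List.mem_cons_self
        have h1 : s(v, (c : β)) ∈ Pp.edgeSet := by simpa using hEP _ hfe
        have h2 : s(v, (c : β)) ∈ H.edgeSet := by simpa using hEH _ hfe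
        have hc : (c : β) ∈ Pp.neighborSet v := Subgraph.mem_edgeSet.mp h1
        rw [hNp, Set.mem_singleton_iff] at hc
        rwa [hc] at h2
    exact nqb ⟨s(v, s), C Pq hqT cq hvq ⟨x1, y1, h1p, h1q⟩,
      C Pb hbT cb hvb ⟨x2, y2, h2p, h2b'⟩⟩
  · -- Case A : v is off the central path Pp
    have hx1p : x1 ∈ Pp.verts := Pp.edge_vert h1p
    have hx1q : x1 ∈ Pq.verts := Pq.edge_vert h1q
    have hx2p : x2 ∈ Pp.verts := Pp.edge_vert h2p
    have hx2b : x2 ∈ Pb.verts := Pb.edge_vert h2b'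
    obtain ⟨π1, hπ1, hE1⟩ := mkWalk hqT cq ⟨v, hqT.1 hvq⟩ ⟨x1, hpT.1 hx1p⟩ hvq hx1q
    obtain ⟨π0, hπ0, hE0⟩ := mkWalk hpT cp ⟨x1, hpT.1 hx1p⟩ ⟨x2, hpT.1 hx2p⟩ hx1p hx2p
    have hEb := edges_in_of_isPath hT hbT cb (x := ⟨v, hqT.1 hvq⟩) (y := ⟨x2, hpT.1 hx2p⟩)
      hvb hx2b (π1.append π0).bypass (π1.append π0).bypass_isPath
    have hvne : (⟨v, hqT.1 hvq⟩ : T.verts) ≠ ⟨x2, hpT.1 hx2p⟩ :=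
      fun h => hvp (by rw [show v = x2 from congrArg Subtype.val h]; exact hx2p)
    obtain ⟨c, hadj, q0, hq0⟩ := exists_cons_of_ne hvne (π1.append π0).bypass
    have hfe : s((⟨v, hqT.1 hvq⟩ : T.verts), c) ∈ (π1.append π0).bypass.edges := by
      rw [hq0, Walk.edges_cons]; exact List.mem_cons_self
    have hb : s(v, (c : β)) ∈ Pb.edgeSet := by simpa using hEb _ hfe
    have hmem : s((⟨v, hqT.1 hvq⟩ : T.verts), c) ∈ π1.edges ++ π0.edges := by
      have := (π1.append π0).edges_bypass_subset hfe
      rwa [Walk.edges_append] at this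
    rcases List.mem_append.mp hmem with h1 | h0
    · exact nqb ⟨s(v, (c : β)), by simpa using hE1 _ h1, hb⟩
    · have hp' : s(v, (c : β)) ∈ Pp.edgeSet := by simpa using hE0 _ h0
      exact hvp (Pp.edge_vert (Subgraph.mem_edgeSet.mp hp'))

/-- replacing `P_p, P_q` by their union yields a representation of the
contracted pair `(G/e, G'/e)`. -/
theorem stmt2 {β V : Type} [Fintype β] [Fintype V] [DecidableEq V]
    (T : SubG β) (Ps : V → SubG β) (G G' : SimpleGraph V) (hle : G' ≤ G)
    (hrep : IsRep T Ps G G') (p q : V) (hcon : ContractibleEdge G G' p q) :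
    IsRep T (fun x : {x : V // x ≠ q} => if (x : V) = p then Ps p ⊔ Ps q else Ps (x : V))
      (contrG G p q) (contrG G' p q) := by
  classical
  obtain ⟨htree, hsub, hpath, hept, henpt⟩ := hrep
  have hGadj : ∀ x y : V, G.Adj x y ↔ x ≠ y ∧ EdgeInt (Ps x) (Ps y) := by
    intro x y; rw [← hept]; simp only [EPTg]
  have hG'adj : ∀ x y : V, G'.Adj x y ↔ x ≠ y ∧ NonSplit (Ps x) (Ps y) := by
    intro x y; rw [← henpt]; simp only [ENPTg]
  have hpqne : p ≠ q := G'.ne_of_adj hcon.1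
  have hnsp : NonSplit (Ps p) (Ps q) := ((hG'adj p q).mp hcon.1).2
  have mm_p : mergeMap p q p = p := by unfold mergeMap; split <;> rfl
  have mm_q : mergeMap p q q = p := by unfold mergeMap; simp
  have mm_other : ∀ x : V, x ≠ q → mergeMap p q x = x := by
    intro x hx; unfold mergeMap; rw [if_neg hx]
  have mergeP : ∀ x : V, p = mergeMap p q x ↔ (x = p ∨ x = q) := by
    intro x
    by_cases hx : x = q
    · subst hx; simp [mm_q]
    · rw [mm_other x hx]
      constructor
      · intro h; exact Or.inl h.symm
      · rintro (rfl | rfl)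
        · rfl
        · exact absurd rfl hx
  have mergeA : ∀ a : V, a ≠ q → a ≠ p → ∀ x : V, (a = mergeMap p q x ↔ x = a) := by
    intro a haq hap x
    by_cases hx : x = q
    · subst hx; rw [mm_q]
      exact iff_of_false hap (fun h => haq h.symm)
    · rw [mm_other x hx]; exact eq_comm
  obtain ⟨x₀, y₀, h0p, h0q⟩ := exists_adj_of_edgeInt hnsp.1
  have hpc := (hpath p).1
  have hqc := (hpath q).1
  have hUconn : (Ps p ⊔ Ps q).Connected :=
    Subgraph.connected_sup hpc.preconnected hqc.preconnected ⟨x₀, (Ps p).edge_vert h0p, (Ps q).edge_vert h0q⟩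
  have hUpath : IsPathSub (Ps p ⊔ Ps q) := by
    refine ⟨hUconn,
      ⟨s(x₀, y₀), Subgraph.mem_edgeSet.mpr (Subgraph.sup_adj.mpr (Or.inl h0p))⟩, ?_⟩
    intro v
    exact ncard_le_of_split_empty hnsp.2 v
  have coreEdge : ∀ b : V, b ≠ q → b ≠ p →
      (EdgeInt (Ps p ⊔ Ps q) (Ps b) ↔ (G.Adj p b ∨ G.Adj q b)) := by
    intro b hbq hbp
    rw [edgeInt_sup_iff]
    constructor
    · rintro (h | h)
      · exact Or.inl ((hGadj p b).mpr ⟨fun e => hbp e.symm, h⟩)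
      · exact Or.inr ((hGadj q b).mpr ⟨fun e => hbq e.symm, h⟩)
    · rintro (h | h)
      · exact Or.inl ((hGadj p b).mp h).2
      · exact Or.inr ((hGadj q b).mp h).2
  have coreNS : ∀ b : V, b ≠ q → b ≠ p →
      (NonSplit (Ps p ⊔ Ps q) (Ps b) ↔ (G'.Adj p b ∨ G'.Adj q b)) := by
    intro b hbq hbp
    constructor
    · rintro ⟨hei, hsp⟩
      have hsp1 : Split (Ps p) (Ps b) = ∅ :=
        Set.subset_empty_iff.mp (hsp ▸ split_mono_s2 le_sup_left)
      have hsp2 : Split (Ps q) (Ps b) = ∅ :=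
        Set.subset_empty_iff.mp (hsp ▸ split_mono_s2 le_sup_right)
      rcases edgeInt_sup_iff.mp hei with h | h
      · exact Or.inl ((hG'adj p b).mpr ⟨fun e => hbp e.symm, h, hsp1⟩)
      · exact Or.inr ((hG'adj q b).mpr ⟨fun e => hbq e.symm, h, hsp2⟩)
    · rintro (h | h)
      · have ns : NonSplit (Ps p) (Ps b) := ((hG'adj p b).mp h).2
        have nqb : ¬ EdgeInt (Ps q) (Ps b) := by
          intro he
          exact ((hcon.2 b).1 h hbq) ((hGadj q b).mpr ⟨fun e => hbq e.symm, he⟩)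
        refine ⟨edgeInt_sup_iff.mpr (Or.inl ns.1), ?_⟩
        exact key htree (hsub p) (hsub q) (hsub b) hpc hqc (hpath b).1
          hnsp.1 ns.1 hnsp.2 ns.2 nqb
      · have ns : NonSplit (Ps q) (Ps b) := ((hG'adj q b).mp h).2
        have npb : ¬ EdgeInt (Ps p) (Ps b) := by
          intro he
          exact ((hcon.2 b).2 h hbp) ((hGadj p b).mpr ⟨fun e => hbp e.symm, he⟩)
        refine ⟨edgeInt_sup_iff.mpr (Or.inr ns.1), ?_⟩
        have hk := key htree (hsub q) (hsub p) (hsub b) hqc hpc (hpath b).1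
          hnsp.1.symm ns.1 (by rw [Split_comm]; exact hnsp.2) ns.2 npb
        rwa [sup_comm (Ps q) (Ps p)] at hk
  have master : ∀ (R : SubG β → SubG β → Prop), (∀ A B : SubG β, R A B → R B A) →
      ∀ (K : SimpleGraph V), (∀ x y : V, K.Adj x y ↔ x ≠ y ∧ R (Ps x) (Ps y)) →
      (∀ b : V, b ≠ q → b ≠ p → (R (Ps p ⊔ Ps q) (Ps b) ↔ (K.Adj p b ∨ K.Adj q b))) →
      ∀ a b : {x : V // x ≠ q}, a ≠ b →
      (R (if (a : V) = p then Ps p ⊔ Ps q else Ps (a : V))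
         (if (b : V) = p then Ps p ⊔ Ps q else Ps (b : V)) ↔
       ∃ x y : V, K.Adj x y ∧ (a : V) = mergeMap p q x ∧ (b : V) = mergeMap p q y) := by
    intro R Rsymm K hK core a b hab
    have hab' : (a : V) ≠ (b : V) := fun h => hab (Subtype.ext h)
    by_cases hap : (a : V) = p <;> by_cases hbp : (b : V) = p
    · exact absurd (hap.trans hbp.symm) hab'
    · rw [if_pos hap, if_neg hbp, core (b : V) b.2 hbp]
      constructor
      · rintro (h | h)
        · exact ⟨p, b, h, by rw [mm_p, hap], (mm_other b b.2).symm⟩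
        · exact ⟨q, b, h, by rw [mm_q, hap], (mm_other b b.2).symm⟩
      · rintro ⟨x, y, hxy, hax, hby⟩
        have hy : y = (b : V) := by
          by_cases hyq : y = q
          · exfalso; rw [hyq, mm_q] at hby; exact hbp hby
          · rw [mm_other y hyq] at hby; exact hby.symm
        rcases (mergeP x).mp (hap.symm.trans hax) with rfl | rfl
        · exact Or.inl (hy ▸ hxy)
        · exact Or.inr (hy ▸ hxy)
    · rw [if_neg hap, if_pos hbp]
      have hcore := core (a : V) a.2 hap
      constructor
      · intro h
        rcases hcore.mp (Rsymm _ _ h) with h' | h'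
        · exact ⟨a, p, h'.symm, (mm_other a a.2).symm, by rw [mm_p, hbp]⟩
        · exact ⟨a, q, h'.symm, (mm_other a a.2).symm, by rw [mm_q, hbp]⟩
      · rintro ⟨x, y, hxy, hax, hby⟩
        have hx : x = (a : V) := by
          by_cases hxq : x = q
          · exfalso; rw [hxq, mm_q] at hax; exact hap hax
          · rw [mm_other x hxq] at hax; exact hax.symm
        apply Rsymm
        apply hcore.mpr
        rcases (mergeP y).mp (hbp.symm.trans hby) with rfl | rfl
        · exact Or.inl (hx ▸ hxy.symm)
        · exact Or.inr (hx ▸ hxy.symm)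
    · rw [if_neg hap, if_neg hbp]
      constructor
      · intro h
        exact ⟨a, b, (hK a b).mpr ⟨hab', h⟩, (mm_other a a.2).symm, (mm_other b b.2).symm⟩
      · rintro ⟨x, y, hxy, hax, hby⟩
        have hx : x = (a : V) := (mergeA a a.2 hap x).mp hax
        have hy : y = (b : V) := (mergeA b b.2 hbp y).mp hby
        subst hx; subst hy
        exact ((hK _ _).mp hxy).2
  refine ⟨htree, ?_, ?_, ?_, ?_⟩
  · intro x
    by_cases hx : (x : V) = p
    · simp only [hx, if_pos]
      exact sup_le (hsub p) (hsub q)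
    · rw [if_neg hx]; exact hsub x
  · intro x
    by_cases hx : (x : V) = p
    · simp only [hx, if_pos]
      exact hUpath
    · rw [if_neg hx]; exact hpath x
  · ext a b
    constructor
    · rintro ⟨h1, h2⟩
      exact ⟨h1, (master EdgeInt (fun A B h => h.symm) G hGadj coreEdge a b h1).mp h2⟩
    · rintro ⟨h1, h2⟩
      exact ⟨h1, (master EdgeInt (fun A B h => h.symm) G hGadj coreEdge a b h1).mpr h2⟩
  · ext a b
    constructor
    · rintro ⟨h1, h2⟩
      exact ⟨h1, (master NonSplit (fun A B h => h.symm) G' hG'adj coreNS a b h1).mp h2⟩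
    · rintro ⟨h1, h2⟩
      exact ⟨h1, (master NonSplit (fun A B h => h.symm) G' hG'adj coreNS a b h1).mpr h2⟩

end ENPT
end

section
/- Let (G,G') be a pair that admits a representation, and let e_1, …, e_k be edges of G' such that the iterated contraction (G,G')/e_1/⋯/e_k is defined. Then for every permutation π of {1,…,k}, the iterated contraction (G,G')/e_{π(1)}/⋯/e_{π(k)} is also defined, and the two resulting pairs are equal. -/
open SimpleGraph

namespace ENPT

variable {β V W U : Type}

section SwapLemmas

variable {V : Type} [LinearOrder V]

lemma mm_left (a b : V) : minMerge a b a = min a b := if_pos (Or.inl rfl)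

lemma mm_right (a b : V) : minMerge a b b = min a b := if_pos (Or.inr rfl)

lemma mm_of {a b x : V} (h1 : x ≠ a) (h2 : x ≠ b) : minMerge a b x = x :=
  if_neg (by rintro (h | h) <;> [exact h1 h; exact h2 h])

lemma minMerge_comm (a b : V) : minMerge a b = minMerge b a :=
  funext fun x => by simp [minMerge, or_comm, min_comm]

lemma ne_min {x a b : V} (h1 : x ≠ a) (h2 : x ≠ b) : x ≠ min a b := by
  rcases min_choice a b with h | h <;> rw [h] <;> assumption

lemma mm_eq_min {a b x : V} (h : minMerge a b x = min a b) : x = a ∨ x = b := by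
  by_cases hx : x = a ∨ x = b
  · exact hx
  · push_neg at hx
    rw [mm_of hx.1 hx.2] at h
    rcases min_choice a b with h' | h' <;> rw [h'] at h <;> [exact Or.inl h; exact Or.inr h]

lemma contrMin_adj {G : SimpleGraph V} {a b x y : V} :
    (contrMin G a b).Adj x y ↔
      x ≠ y ∧ ∃ u v, G.Adj u v ∧ x = minMerge a b u ∧ y = minMerge a b v := Iff.rfl

lemma contrMin_adj_of {G : SimpleGraph V} {a b u v : V} (h : G.Adj u v)
    (hne : minMerge a b u ≠ minMerge a b v) :
    (contrMin G a b).Adj (minMerge a b u) (minMerge a b v) :=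
  ⟨hne, u, v, h, rfl, rfl⟩

lemma contrMin_comm (G : SimpleGraph V) (a b : V) : contrMin G a b = contrMin G b a := by
  ext x y
  rw [contrMin_adj, contrMin_adj, minMerge_comm a b]

lemma contrMin_mono {A B : SimpleGraph V} (h : B ≤ A) (a b : V) :
    contrMin B a b ≤ contrMin A a b := by
  rintro x y ⟨hxy, u, v, huv, hu, hv⟩
  exact ⟨hxy, u, v, h huv, hu, hv⟩

lemma CC_symm {A B : SimpleGraph V} {p q : V} (h : ContractibleCond A B p q) :
    ContractibleCond A B q p := fun r => ⟨(h r).2, (h r).1⟩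

lemma contrMin_contrMin_adj {G : SimpleGraph V} {a b c d x y : V} :
    (contrMin (contrMin G a b) c d).Adj x y ↔
      x ≠ y ∧ ∃ u v, G.Adj u v ∧
        x = minMerge c d (minMerge a b u) ∧ y = minMerge c d (minMerge a b v) := by
  constructor
  · rintro ⟨hxy, x1, y1, ⟨-, u, v, huv, rfl, rfl⟩, rfl, rfl⟩
    exact ⟨hxy, u, v, huv, rfl, rfl⟩
  · rintro ⟨hxy, u, v, huv, rfl, rfl⟩
    refine ⟨hxy, _, _, ⟨fun h => hxy (by rw [h]), u, v, huv, rfl, rfl⟩, rfl, rfl⟩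

lemma contr2_eq {G : SimpleGraph V} {a b c d a' b' c' d' : V}
    (hfun : ∀ x, minMerge c' d' (minMerge a b x) = minMerge a' b' (minMerge c d x)) :
    contrMin (contrMin G a b) c' d' = contrMin (contrMin G c d) a' b' := by
  ext x y
  rw [contrMin_contrMin_adj, contrMin_contrMin_adj]
  simp only [hfun]

/-- Composite merge maps commute: shared-vertex case (edges `{a,b}` and `{a,d}`). -/
lemma mcm_shared {a b d : V} (hab : a ≠ b) (had : a ≠ d) (hbd : b ≠ d) (x : V) :
    minMerge (min a b) d (minMerge a b x) = minMerge (min a d) b (minMerge a d x) := by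
  by_cases hxa : x = a
  · rw [hxa, mm_left a b, mm_left a d, mm_left (min a b) d, mm_left (min a d) b, min_right_comm]
  by_cases hxb : x = b
  · rw [hxb, mm_right a b, mm_left (min a b) d, mm_of (Ne.symm hab) hbd,
      mm_right (min a d) b, min_right_comm]
  by_cases hxd : x = d
  · rw [hxd, mm_of (Ne.symm had) (Ne.symm hbd), mm_right (min a b) d, mm_right a d,
      mm_left (min a d) b, min_right_comm]
  · rw [mm_of hxa hxb, mm_of hxa hxd, mm_of (ne_min hxa hxb) hxd, mm_of (ne_min hxa hxd) hxb]

/-- Composite merge maps commute: disjoint case. -/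
lemma mcm_disj {a b c d : V} (hca : c ≠ a) (hcb : c ≠ b) (hda : d ≠ a) (hdb : d ≠ b) (x : V) :
    minMerge c d (minMerge a b x) = minMerge a b (minMerge c d x) := by
  by_cases hxa : x = a
  · rw [hxa, mm_of (Ne.symm hca) (Ne.symm hda), mm_left a b,
      mm_of (ne_min hca hcb).symm (ne_min hda hdb).symm]
  by_cases hxb : x = b
  · rw [hxb, mm_of (Ne.symm hcb) (Ne.symm hdb), mm_right a b,
      mm_of (ne_min hca hcb).symm (ne_min hda hdb).symm]
  by_cases hxc : x = c
  · rw [hxc, mm_of hca hcb, mm_left c d,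
      mm_of (ne_min (Ne.symm hca) (Ne.symm hda)).symm (ne_min (Ne.symm hcb) (Ne.symm hdb)).symm]
  by_cases hxd : x = d
  · rw [hxd, mm_of hda hdb, mm_right c d,
      mm_of (ne_min (Ne.symm hca) (Ne.symm hda)).symm (ne_min (Ne.symm hcb) (Ne.symm hdb)).symm]
  · rw [mm_of hxa hxb, mm_of hxc hxd, mm_of hxa hxb]

/-- Composite merge maps commute, general case. -/
lemma merge_comm_maps {a b c d : V} (hab : a ≠ b) (hcd : c ≠ d)
    (hne : minMerge a b c ≠ minMerge a b d) (x : V) :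
    minMerge (minMerge a b c) (minMerge a b d) (minMerge a b x)
      = minMerge (minMerge c d a) (minMerge c d b) (minMerge c d x) := by
  by_cases hca : c = a
  · have hdb : d ≠ b := fun h => hne (by rw [hca, h, mm_left a b, mm_right a b])
    have hda : d ≠ a := fun h => hcd (hca.trans h.symm)
    rw [hca, mm_left a b, mm_of hda hdb, mm_left a d, mm_of (Ne.symm hab) (Ne.symm hdb)]
    exact mcm_shared hab (Ne.symm hda) (Ne.symm hdb) x
  by_cases hcb : c = b
  · have hda : d ≠ a := fun h => hne (by rw [hcb, h, mm_right a b, mm_left a b])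
    have hdb : d ≠ b := fun h => hcd (hcb.trans h.symm)
    rw [hcb, mm_right a b, mm_of hda hdb, mm_of hab (Ne.symm hda), mm_left b d,
      minMerge_comm a (min b d), min_comm a b, minMerge_comm a b]
    exact mcm_shared (Ne.symm hab) (Ne.symm hdb) (Ne.symm hda) x
  by_cases hda : d = a
  · rw [hda, mm_of hca hcb, mm_left a b, mm_right c a, mm_of (Ne.symm hcb) (Ne.symm hab),
      minMerge_comm c (min a b), min_comm c a, minMerge_comm c a]
    exact mcm_shared hab (Ne.symm hca) (Ne.symm hcb) x
  by_cases hdb : d = b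
  · rw [hdb, mm_of hca hcb, mm_right a b, mm_of (Ne.symm hca) hab, mm_right c b,
      minMerge_comm c (min a b), minMerge_comm a (min c b), min_comm a b, minMerge_comm a b,
      min_comm c b, minMerge_comm c b]
    exact mcm_shared (Ne.symm hab) (Ne.symm hcb) (Ne.symm hca) x
  · rw [mm_of hca hcb, mm_of hda hdb, mm_of (Ne.symm hca) (Ne.symm hda),
      mm_of (Ne.symm hcb) (Ne.symm hdb)]
    exact mcm_disj hca hcb hda hdb x

/-- Contractibility transfer, shared-vertex case: edges `{a,b}`, `{a,d}`. -/
lemma cc_shared {A B : SimpleGraph V} (hBA : B ≤ A) {a b d : V}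
    (hab : B.Adj a b) (had : B.Adj a d) (hbd : b ≠ d)
    (h1 : ContractibleCond A B a b)
    (h3 : ContractibleCond (contrMin A a b) (contrMin B a b) (min a b) d) :
    ContractibleCond A B a d ∧
      ContractibleCond (contrMin A a d) (contrMin B a d) (min a d) b := by
  have hab' : a ≠ b := hab.ne
  have had' : a ≠ d := had.ne
  have hdb : d ≠ b := Ne.symm hbd
  have hda : d ≠ a := Ne.symm had'
  have hba : b ≠ a := Ne.symm hab'
  constructor
  · intro r
    constructor
    · intro hBar hrd hAdr
      by_cases hrb : r = b
      · exact (h1 d).1 had hdb (hrb ▸ hAdr).symm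
      · have hra : r ≠ a := hBar.ne'
        have hrm : r ≠ min a b := ne_min hra hrb
        have hB1 : (contrMin B a b).Adj (min a b) r :=
          ⟨hrm.symm, a, r, hBar, (mm_left a b).symm, (mm_of hra hrb).symm⟩
        have hA1 : (contrMin A a b).Adj d r :=
          ⟨hrd.symm, d, r, hAdr, (mm_of hda hdb).symm, (mm_of hra hrb).symm⟩
        exact (h3 r).1 hB1 hrd hA1
    · intro hBdr hra hAar
      by_cases hrb : r = b
      · exact (h1 d).2 (hrb ▸ hBdr).symm hda (hBA had)
      · have hrd : r ≠ d := hBdr.ne'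
        have hrm : r ≠ min a b := ne_min hra hrb
        have hB1 : (contrMin B a b).Adj d r :=
          ⟨hrd.symm, d, r, hBdr, (mm_of hda hdb).symm, (mm_of hra hrb).symm⟩
        have hA1 : (contrMin A a b).Adj (min a b) r :=
          ⟨hrm.symm, a, r, hAar, (mm_left a b).symm, (mm_of hra hrb).symm⟩
        exact (h3 r).2 hB1 hrm hA1
  · intro s
    have hbmin : b ≠ min a d := ne_min hba hbd
    constructor
    · rintro ⟨hns, u, v, huv, hu, hv⟩ hsb ⟨hbs, x, y, hxy, hx, hy⟩
      have hva : v ≠ a := fun h => hns (by rw [hv, h, mm_left a d])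
      have hvd : v ≠ d := fun h => hns (by rw [hv, h, mm_right a d])
      rw [mm_of hva hvd] at hv
      have hxb : x = b := by
        by_cases hx' : x = a ∨ x = d
        · exfalso
          rcases hx' with h | h
          · exact hbmin (by rw [hx, h, mm_left a d])
          · exact hbmin (by rw [hx, h, mm_right a d])
        · push_neg at hx'
          rw [mm_of hx'.1 hx'.2] at hx
          exact hx.symm
      have hya : y ≠ a := fun h => hns (by rw [hy, h, mm_left a d])
      have hyd : y ≠ d := fun h => hns (by rw [hy, h, mm_right a d])
      rw [mm_of hya hyd] at hy
      rw [hxb, hy.symm.trans hv] at hxy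
      have hvb : v ≠ b := fun h => hsb (hv.trans h)
      rcases mm_eq_min hu.symm with hu' | hu'
      · rw [hu'] at huv
        exact (h1 v).1 huv hvb hxy
      · rw [hu'] at huv
        have hvm : v ≠ min a b := ne_min hva hvb
        have hB1 : (contrMin B a b).Adj d v :=
          ⟨huv.ne, d, v, huv, (mm_of hda hdb).symm, (mm_of hva hvb).symm⟩
        have hA1 : (contrMin A a b).Adj (min a b) v :=
          ⟨hvm.symm, b, v, hxy, (mm_right a b).symm, (mm_of hva hvb).symm⟩
        exact (h3 v).2 hB1 hvm hA1
    · rintro ⟨hbs, u, v, huv, hu, hv⟩ hsn ⟨hns, x, y, hxy, hx, hy⟩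
      have hub : u = b := by
        by_cases hu' : u = a ∨ u = d
        · exfalso
          rcases hu' with h | h
          · exact hbmin (by rw [hu, h, mm_left a d])
          · exact hbmin (by rw [hu, h, mm_right a d])
        · push_neg at hu'
          rw [mm_of hu'.1 hu'.2] at hu
          exact hu.symm
      have hva : v ≠ a := fun h => hsn (hv.trans (by rw [h, mm_left a d]))
      have hvd : v ≠ d := fun h => hsn (hv.trans (by rw [h, mm_right a d]))
      rw [mm_of hva hvd] at hv
      have hya : y ≠ a := fun h => hsn (hy.trans (by rw [h, mm_left a d]))
      have hyd : y ≠ d := fun h => hsn (hy.trans (by rw [h, mm_right a d]))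
      rw [mm_of hya hyd] at hy
      rw [hub] at huv
      rw [hy.symm.trans hv] at hxy
      rw [hv] at hbs
      rcases mm_eq_min hx.symm with hx' | hx'
      · rw [hx'] at hxy
        exact (h1 v).2 huv hva hxy
      · rw [hx'] at hxy
        have hvb : v ≠ b := fun h => hbs h.symm
        have hvm : v ≠ min a b := ne_min hva hvb
        have hB1 : (contrMin B a b).Adj (min a b) v :=
          ⟨hvm.symm, b, v, huv, (mm_right a b).symm, (mm_of hva hvb).symm⟩
        have hA1 : (contrMin A a b).Adj d v :=
          ⟨hxy.ne, d, v, hxy, (mm_of hda hdb).symm, (mm_of hva hvb).symm⟩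
        exact (h3 v).1 hB1 hvd hA1

/-- Contractibility transfer, disjoint case. -/
lemma cc_disj {A B : SimpleGraph V} (hBA : B ≤ A) {a b c d : V}
    (hab : B.Adj a b) (hcd : B.Adj c d)
    (hca : c ≠ a) (hcb : c ≠ b) (hda : d ≠ a) (hdb : d ≠ b)
    (h1 : ContractibleCond A B a b)
    (h3 : ContractibleCond (contrMin A a b) (contrMin B a b) c d) :
    ContractibleCond A B c d ∧
      ContractibleCond (contrMin A c d) (contrMin B c d) a b := by
  have hab' : a ≠ b := hab.ne
  have hcd' : c ≠ d := hcd.ne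
  have hamin : a ≠ min c d := ne_min (Ne.symm hca) (Ne.symm hda)
  have hbmin : b ≠ min c d := ne_min (Ne.symm hcb) (Ne.symm hdb)
  constructor
  · intro r
    constructor
    · intro hBcr hrd hAdr
      have hrc : r ≠ c := hBcr.ne'
      have hr1 : c ≠ minMerge a b r := by
        by_cases hr : r = a ∨ r = b
        · rcases hr with h | h
          · rw [h, mm_left a b]; exact ne_min hca hcb
          · rw [h, mm_right a b]; exact ne_min hca hcb
        · push_neg at hr
          rw [mm_of hr.1 hr.2]; exact hrc.symm
      have hr2 : d ≠ minMerge a b r := by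
        by_cases hr : r = a ∨ r = b
        · rcases hr with h | h
          · rw [h, mm_left a b]; exact ne_min hda hdb
          · rw [h, mm_right a b]; exact ne_min hda hdb
        · push_neg at hr
          rw [mm_of hr.1 hr.2]; exact hrd.symm
      have hB1 : (contrMin B a b).Adj c (minMerge a b r) :=
        ⟨hr1, c, r, hBcr, (mm_of hca hcb).symm, rfl⟩
      have hA1 : (contrMin A a b).Adj d (minMerge a b r) :=
        ⟨hr2, d, r, hAdr, (mm_of hda hdb).symm, rfl⟩
      exact (h3 (minMerge a b r)).1 hB1 hr2.symm hA1
    · intro hBdr hrc hAcr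
      have hrd : r ≠ d := hBdr.ne'
      have hr1 : d ≠ minMerge a b r := by
        by_cases hr : r = a ∨ r = b
        · rcases hr with h | h
          · rw [h, mm_left a b]; exact ne_min hda hdb
          · rw [h, mm_right a b]; exact ne_min hda hdb
        · push_neg at hr
          rw [mm_of hr.1 hr.2]; exact hrd.symm
      have hr2 : c ≠ minMerge a b r := by
        by_cases hr : r = a ∨ r = b
        · rcases hr with h | h
          · rw [h, mm_left a b]; exact ne_min hca hcb
          · rw [h, mm_right a b]; exact ne_min hca hcb
        · push_neg at hr
          rw [mm_of hr.1 hr.2]; exact hrc.symm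
      have hB1 : (contrMin B a b).Adj d (minMerge a b r) :=
        ⟨hr1, d, r, hBdr, (mm_of hda hdb).symm, rfl⟩
      have hA1 : (contrMin A a b).Adj c (minMerge a b r) :=
        ⟨hr2, c, r, hAcr, (mm_of hca hcb).symm, rfl⟩
      exact (h3 (minMerge a b r)).2 hB1 hr2.symm hA1
  · intro s
    constructor
    · rintro ⟨has, u, v, huv, hu, hv⟩ hsb ⟨hbs, x, y, hxy, hx, hy⟩
      have hua : u = a := by
        by_cases hu' : u = c ∨ u = d
        · exfalso
          rcases hu' with h | h
          · exact hamin (by rw [hu, h, mm_left c d])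
          · exact hamin (by rw [hu, h, mm_right c d])
        · push_neg at hu'
          rw [mm_of hu'.1 hu'.2] at hu
          exact hu.symm
      have hxb : x = b := by
        by_cases hx' : x = c ∨ x = d
        · exfalso
          rcases hx' with h | h
          · exact hbmin (by rw [hx, h, mm_left c d])
          · exact hbmin (by rw [hx, h, mm_right c d])
        · push_neg at hx'
          rw [mm_of hx'.1 hx'.2] at hx
          exact hx.symm
      rw [hua] at huv
      rw [hxb] at hxy
      by_cases hv' : v = c ∨ v = d
      · have hs : s = min c d := by
          rcases hv' with h | h
          · rw [hv, h, mm_left c d]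
          · rw [hv, h, mm_right c d]
        have hy' : y = c ∨ y = d := mm_eq_min (hy.symm.trans hs)
        rcases hv' with hv1 | hv1 <;> rcases hy' with hy1 | hy1
        · rw [hv1] at huv; rw [hy1] at hxy
          exact (h1 c).1 huv hcb hxy
        · rw [hv1] at huv; rw [hy1] at hxy
          have hB1 : (contrMin B a b).Adj c (min a b) :=
            ⟨ne_min hca hcb, c, a, huv.symm, (mm_of hca hcb).symm, (mm_left a b).symm⟩
          have hA1 : (contrMin A a b).Adj d (min a b) :=
            ⟨ne_min hda hdb, d, b, hxy.symm, (mm_of hda hdb).symm, (mm_right a b).symm⟩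
          exact (h3 (min a b)).1 hB1 (ne_min hda hdb).symm hA1
        · rw [hv1] at huv; rw [hy1] at hxy
          have hB1 : (contrMin B a b).Adj d (min a b) :=
            ⟨ne_min hda hdb, d, a, huv.symm, (mm_of hda hdb).symm, (mm_left a b).symm⟩
          have hA1 : (contrMin A a b).Adj c (min a b) :=
            ⟨ne_min hca hcb, c, b, hxy.symm, (mm_of hca hcb).symm, (mm_right a b).symm⟩
          exact (h3 (min a b)).2 hB1 (ne_min hca hcb).symm hA1
        · rw [hv1] at huv; rw [hy1] at hxy
          exact (h1 d).1 huv hdb hxy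
      · push_neg at hv'
        rw [mm_of hv'.1 hv'.2] at hv
        have hyc : y ≠ c := by
          intro h
          have hvm : v = min c d := hv.symm.trans (by rw [hy, h, mm_left c d])
          rcases min_choice c d with h' | h'
          · exact hv'.1 (hvm.trans h')
          · exact hv'.2 (hvm.trans h')
        have hyd : y ≠ d := by
          intro h
          have hvm : v = min c d := hv.symm.trans (by rw [hy, h, mm_right c d])
          rcases min_choice c d with h' | h'
          · exact hv'.1 (hvm.trans h')
          · exact hv'.2 (hvm.trans h')
        rw [mm_of hyc hyd] at hy
        rw [hy.symm.trans hv] at hxy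
        exact (h1 v).1 huv (fun h => hsb (hv.trans h)) hxy
    · rintro ⟨hbs, u, v, huv, hu, hv⟩ hsa ⟨has, x, y, hxy, hx, hy⟩
      have hub : u = b := by
        by_cases hu' : u = c ∨ u = d
        · exfalso
          rcases hu' with h | h
          · exact hbmin (by rw [hu, h, mm_left c d])
          · exact hbmin (by rw [hu, h, mm_right c d])
        · push_neg at hu'
          rw [mm_of hu'.1 hu'.2] at hu
          exact hu.symm
      have hxa : x = a := by
        by_cases hx' : x = c ∨ x = d
        · exfalso
          rcases hx' with h | h
          · exact hamin (by rw [hx, h, mm_left c d])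
          · exact hamin (by rw [hx, h, mm_right c d])
        · push_neg at hx'
          rw [mm_of hx'.1 hx'.2] at hx
          exact hx.symm
      rw [hub] at huv
      rw [hxa] at hxy
      by_cases hv' : v = c ∨ v = d
      · have hs : s = min c d := by
          rcases hv' with h | h
          · rw [hv, h, mm_left c d]
          · rw [hv, h, mm_right c d]
        have hy' : y = c ∨ y = d := mm_eq_min (hy.symm.trans hs)
        rcases hv' with hv1 | hv1 <;> rcases hy' with hy1 | hy1
        · rw [hv1] at huv; rw [hy1] at hxy
          exact (h1 c).2 huv hca hxy
        · rw [hv1] at huv; rw [hy1] at hxy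
          have hB1 : (contrMin B a b).Adj c (min a b) :=
            ⟨ne_min hca hcb, c, b, huv.symm, (mm_of hca hcb).symm, (mm_right a b).symm⟩
          have hA1 : (contrMin A a b).Adj d (min a b) :=
            ⟨ne_min hda hdb, d, a, hxy.symm, (mm_of hda hdb).symm, (mm_left a b).symm⟩
          exact (h3 (min a b)).1 hB1 (ne_min hda hdb).symm hA1
        · rw [hv1] at huv; rw [hy1] at hxy
          have hB1 : (contrMin B a b).Adj d (min a b) :=
            ⟨ne_min hda hdb, d, b, huv.symm, (mm_of hda hdb).symm, (mm_right a b).symm⟩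
          have hA1 : (contrMin A a b).Adj c (min a b) :=
            ⟨ne_min hca hcb, c, a, hxy.symm, (mm_of hca hcb).symm, (mm_left a b).symm⟩
          exact (h3 (min a b)).2 hB1 (ne_min hca hcb).symm hA1
        · rw [hv1] at huv; rw [hy1] at hxy
          exact (h1 d).2 huv hda hxy
      · push_neg at hv'
        rw [mm_of hv'.1 hv'.2] at hv
        have hyc : y ≠ c := by
          intro h
          have hvm : v = min c d := hv.symm.trans (by rw [hy, h, mm_left c d])
          rcases min_choice c d with h' | h'
          · exact hv'.1 (hvm.trans h')
          · exact hv'.2 (hvm.trans h')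
        have hyd : y ≠ d := by
          intro h
          have hvm : v = min c d := hv.symm.trans (by rw [hy, h, mm_right c d])
          rcases min_choice c d with h' | h'
          · exact hv'.1 (hvm.trans h')
          · exact hv'.2 (hvm.trans h')
        rw [mm_of hyc hyd] at hy
        rw [hy.symm.trans hv] at hxy
        exact (h1 v).2 huv (fun h => hsa (hv.trans h)) hxy

/-- Core swap lemma: transfer of contractibility conditions. -/
lemma swap_core {A B : SimpleGraph V} (hBA : B ≤ A) {a b c d : V}
    (hab : B.Adj a b) (hcd : B.Adj c d)
    (h1 : ContractibleCond A B a b)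
    (hne : minMerge a b c ≠ minMerge a b d)
    (h3 : ContractibleCond (contrMin A a b) (contrMin B a b)
      (minMerge a b c) (minMerge a b d)) :
    ContractibleCond A B c d ∧
      minMerge c d a ≠ minMerge c d b ∧
      ContractibleCond (contrMin A c d) (contrMin B c d)
        (minMerge c d a) (minMerge c d b) := by
  have hab' : a ≠ b := hab.ne
  have hcd' : c ≠ d := hcd.ne
  by_cases hca : c = a
  · have hdb : d ≠ b := fun h => hne (by rw [hca, h, mm_left a b, mm_right a b])
    have hda : d ≠ a := fun h => hcd' (hca.trans h.symm)
    rw [hca, mm_left a b, mm_of hda hdb] at h3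
    have hcd2 : B.Adj a d := by rw [← hca]; exact hcd
    obtain ⟨g1, g2⟩ := cc_shared hBA hab hcd2 (Ne.symm hdb) h1 h3
    refine ⟨?_, ?_, ?_⟩
    · rw [hca]; exact g1
    · rw [hca, mm_left a d, mm_of (Ne.symm hab') (Ne.symm hdb)]
      exact (ne_min (Ne.symm hab') (Ne.symm hdb)).symm
    · rw [hca, mm_left a d, mm_of (Ne.symm hab') (Ne.symm hdb)]
      exact g2
  by_cases hcb : c = b
  · have hda : d ≠ a := fun h => hne (by rw [hcb, h, mm_right a b, mm_left a b])
    have hdb : d ≠ b := fun h => hcd' (hcb.trans h.symm)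
    rw [hcb, mm_right a b, mm_of hda hdb, contrMin_comm A a b, contrMin_comm B a b,
      min_comm a b] at h3
    have hcd2 : B.Adj b d := by rw [← hcb]; exact hcd
    obtain ⟨g1, g2⟩ := cc_shared hBA hab.symm hcd2 (Ne.symm hda) (CC_symm h1) h3
    refine ⟨?_, ?_, ?_⟩
    · rw [hcb]; exact g1
    · rw [hcb, mm_of hab' (Ne.symm hda), mm_left b d]
      exact ne_min hab' (Ne.symm hda)
    · rw [hcb, mm_of hab' (Ne.symm hda), mm_left b d]
      exact CC_symm g2
  by_cases hda : d = a
  · rw [hda, mm_of hca hcb, mm_left a b] at h3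
    have hcd2 : B.Adj a c := by rw [← hda]; exact hcd.symm
    obtain ⟨g1, g2⟩ := cc_shared hBA hab hcd2 (Ne.symm hcb) h1 (CC_symm h3)
    refine ⟨?_, ?_, ?_⟩
    · rw [hda]; exact CC_symm g1
    · rw [hda, mm_right c a, mm_of (Ne.symm hcb) (Ne.symm hab'), min_comm c a]
      exact (ne_min (Ne.symm hab') (Ne.symm hcb)).symm
    · rw [hda, mm_right c a, mm_of (Ne.symm hcb) (Ne.symm hab'), contrMin_comm A c a,
        contrMin_comm B c a, min_comm c a]
      exact g2
  by_cases hdb : d = b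
  · rw [hdb, mm_of hca hcb, mm_right a b, contrMin_comm A a b, contrMin_comm B a b,
      min_comm a b] at h3
    have hcd2 : B.Adj b c := by rw [← hdb]; exact hcd.symm
    obtain ⟨g1, g2⟩ := cc_shared hBA hab.symm hcd2 (Ne.symm hca) (CC_symm h1) (CC_symm h3)
    refine ⟨?_, ?_, ?_⟩
    · rw [hdb]; exact CC_symm g1
    · rw [hdb, mm_of (Ne.symm hca) hab', mm_right c b]
      exact ne_min (Ne.symm hca) hab'
    · rw [hdb, mm_of (Ne.symm hca) hab', mm_right c b, contrMin_comm A c b,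
        contrMin_comm B c b, min_comm c b]
      exact CC_symm g2
  · rw [mm_of hca hcb, mm_of hda hdb] at h3
    obtain ⟨g1, g2⟩ := cc_disj hBA hab hcd hca hcb hda hdb h1 h3
    refine ⟨g1, ?_, ?_⟩
    · rw [mm_of (Ne.symm hca) (Ne.symm hda), mm_of (Ne.symm hcb) (Ne.symm hdb)]
      exact hab'
    · rw [mm_of (Ne.symm hca) (Ne.symm hda), mm_of (Ne.symm hcb) (Ne.symm hdb)]
      exact g2

/-- Invariant carried along the induction. -/
def Good (f : V → V) (GG : SimpleGraph V × SimpleGraph V) (l : List (V × V)) : Prop :=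
  GG.2 ≤ GG.1 ∧ ∀ e ∈ l, f e.1 ≠ f e.2 → GG.2.Adj (f e.1) (f e.2)

lemma good_step {f : V → V} {GG : SimpleGraph V × SimpleGraph V} {x : V × V}
    {l : List (V × V)} (hg : Good f GG (x :: l)) :
    Good (minMerge (f x.1) (f x.2) ∘ f) (stepPair GG (f x.1, f x.2)) l := by
  refine ⟨contrMin_mono hg.1 _ _, ?_⟩
  intro e he hne
  have hne' : f e.1 ≠ f e.2 := by
    intro h
    exact hne (by simp [Function.comp, h])
  exact contrMin_adj_of (hg.2 e (List.mem_cons_of_mem x he) hne') hne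

lemma good_perm {f : V → V} {GG : SimpleGraph V × SimpleGraph V} {l l' : List (V × V)}
    (hp : l.Perm l') (hg : Good f GG l) : Good f GG l' :=
  ⟨hg.1, fun e he => hg.2 e (hp.symm.subset he)⟩

/-- Master lemma: permutation invariance of the iterated contraction. -/
lemma perm_go {l l' : List (V × V)} (hperm : l.Perm l') :
    ∀ (f : V → V) (GG : SimpleGraph V × SimpleGraph V), Good f GG l → DefinedGo f GG l →
      DefinedGo f GG l' ∧ contractGo f GG l = contractGo f GG l' := by
  induction hperm with
  | nil => exact fun f GG _ _ => ⟨trivial, rfl⟩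
  | cons x p ih =>
    intro f GG hg hd
    obtain ⟨h1, h2⟩ := hd
    obtain ⟨hd', he'⟩ := ih _ _ (good_step hg) h2
    exact ⟨⟨h1, hd'⟩, he'⟩
  | swap x y l =>
    -- (y :: x :: l).Perm (x :: y :: l)
    intro f GG hg hd
    obtain ⟨⟨hBab, hCC1⟩, ⟨hBcd', hCC2'⟩, hdtail⟩ := hd
    set a := f y.1 with ha
    set b := f y.2 with hb
    set c := f x.1 with hc
    set d := f x.2 with hd2
    have hBA : GG.2 ≤ GG.1 := hg.1
    have hne : minMerge a b c ≠ minMerge a b d := hBcd'.ne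
    have hcdne : c ≠ d := by
      intro h
      exact hne (by rw [h])
    have hBcd : GG.2.Adj c d := hg.2 x (by simp) hcdne
    obtain ⟨hCC1', hne', hCC2''⟩ := swap_core hBA hBab hBcd hCC1 hne hCC2'
    have habne : a ≠ b := hBab.ne
    have hmap : ∀ z, minMerge (minMerge c d a) (minMerge c d b) (minMerge c d z)
        = minMerge (minMerge a b c) (minMerge a b d) (minMerge a b z) := fun z =>
      (merge_comm_maps habne hcdne hne z).symm
    have hpair : stepPair (stepPair GG (c, d)) (minMerge c d a, minMerge c d b)
        = stepPair (stepPair GG (a, b)) (minMerge a b c, minMerge a b d) := by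
      unfold stepPair
      exact Prod.ext (contr2_eq hmap) (contr2_eq hmap)
    have hfun : (minMerge (minMerge c d a) (minMerge c d b) ∘ minMerge c d ∘ f)
        = (minMerge (minMerge a b c) (minMerge a b d) ∘ minMerge a b ∘ f) :=
      funext fun z => hmap (f z)
    have hBadj2 : (contrMin GG.2 c d).Adj (minMerge c d a) (minMerge c d b) :=
      contrMin_adj_of hBab hne'
    constructor
    · refine ⟨⟨hBcd, hCC1'⟩, ⟨hBadj2, hCC2''⟩, ?_⟩
      show DefinedGo _ _ l
      have : (minMerge ((minMerge c d ∘ f) y.1) ((minMerge c d ∘ f) y.2) ∘ minMerge c d ∘ f)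
          = (minMerge (minMerge a b c) (minMerge a b d) ∘ minMerge a b ∘ f) := hfun
      rw [show stepPair (stepPair GG (c, d))
          ((minMerge c d ∘ f) y.1, (minMerge c d ∘ f) y.2)
          = stepPair (stepPair GG (a, b)) (minMerge a b c, minMerge a b d) from hpair, this]
      exact hdtail
    · show contractGo _ _ l = contractGo _ _ l
      rw [show stepPair (stepPair GG (a, b))
          ((minMerge a b ∘ f) x.1, (minMerge a b ∘ f) x.2)
          = stepPair (stepPair GG (c, d))
            ((minMerge c d ∘ f) y.1, (minMerge c d ∘ f) y.2) from hpair.symm,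
        show (minMerge ((minMerge a b ∘ f) x.1) ((minMerge a b ∘ f) x.2) ∘ minMerge a b ∘ f)
          = (minMerge ((minMerge c d ∘ f) y.1) ((minMerge c d ∘ f) y.2) ∘ minMerge c d ∘ f)
          from hfun.symm]
  | trans p1 p2 ih1 ih2 =>
    intro f GG hg hd
    obtain ⟨hd2, he2⟩ := ih1 f GG hg hd
    obtain ⟨hd3, he3⟩ := ih2 f GG (good_perm p1 hg) hd2
    exact ⟨hd3, he2.trans he3⟩

end SwapLemmas

/-- the order of an iterated contraction is irrelevant: any permutation of a
defined sequence of contractions is defined and yields the same pair. -/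
theorem stmt3 {V : Type} [Fintype V] [LinearOrder V]
    (G G' : SimpleGraph V) (hle : G' ≤ G)
    (hrep : ∃ (β : Type) (_ : Fintype β) (T : SubG β) (Ps : V → SubG β), IsRep T Ps G G')
    (l l' : List (V × V))
    (hedges : ∀ e ∈ l, G'.Adj e.1 e.2)
    (hperm : l.Perm l')
    (hdef : DefinedGo id (G, G') l) :
    DefinedGo id (G, G') l' ∧ contractGo id (G, G') l = contractGo id (G, G') l' := by
  have hgood : Good id (G, G') l := ⟨hle, fun e he _ => hedges e he⟩
  exact perm_go hperm id (G, G') hgood hdef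

end ENPT
end

section
/- Let (G,G') be a pair that admits a representation satisfying (P3), and let e ∈ E(G') be contractible. Then the contracted pair (G,G')/e admits a representation satisfying (P3). -/
open SimpleGraph

namespace ENPT

variable {β V W U : Type}

section Aux

variable {β : Type}

lemma split_le_two {P Q : SubG β} (h : Split P Q = ∅) (w : β) :
    ((P ⊔ Q).neighborSet w).ncard ≤ 2 := by
  by_contra hc
  have : w ∈ Split P Q := by simp only [Split, Set.mem_setOf_eq]; omega
  simp [h] at this

lemma exists_walk {T H : SubG β} (hHT : H ≤ T) (hc : H.Connected)
    {u v : T.verts} (hu : (u : β) ∈ H.verts) (hv : (v : β) ∈ H.verts) :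
    ∃ p : T.coe.Walk u v,
      ∀ e ∈ p.edges, Sym2.map Subtype.val e ∈ H.edgeSet := by
  obtain ⟨w0⟩ := hc.coe.preconnected ⟨(u : β), hu⟩ ⟨(v : β), hv⟩
  refine ⟨(w0.map (SimpleGraph.Subgraph.inclusion hHT)).copy (by ext; rfl) (by ext; rfl), ?_⟩
  intro e he
  rw [SimpleGraph.Walk.edges_copy, SimpleGraph.Walk.edges_map, List.mem_map] at he
  obtain ⟨e', he', rfl⟩ := he
  have hmem : e' ∈ H.coe.edgeSet := w0.edges_subset_edgeSet he'
  induction e' using Sym2.ind with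
  | _ a b =>
    rw [SimpleGraph.mem_edgeSet] at hmem
    have : H.Adj (a : β) (b : β) := hmem
    simp only [Sym2.map_pair_eq, SimpleGraph.Subgraph.mem_edgeSet]
    exact this

lemma exists_first_edge {γ : Type} {G : SimpleGraph γ} {u v : γ} (p : G.Walk u v) (h : u ≠ v) :
    ∃ c, G.Adj u c ∧ s(u, c) ∈ p.edges ∧ c ∈ p.support := by
  cases p with
  | nil => exact absurd rfl h
  | cons h' q => exact ⟨_, h', by simp, by simp⟩

lemma KL [Fintype β] {T P Q R : SubG β} (hT : T.coe.IsTree)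
    (hPT : P ≤ T) (hQT : Q ≤ T) (hRT : R ≤ T)
    (hPc : P.Connected) (hQc : Q.Connected) (hRc : R.Connected)
    (hPQ : EdgeInt P Q) (hsPQ : Split P Q = ∅)
    (hPR : EdgeInt P R) (hsPR : Split P R = ∅)
    (hQR : ¬ EdgeInt Q R) : Split (P ⊔ Q) R = ∅ := by
  classical
  rw [Set.eq_empty_iff_forall_notMem]
  intro w hw
  set Np := P.neighborSet w with hNp
  set Nq := Q.neighborSet w with hNq
  set Nr := R.neighborSet w with hNr
  have hw3 : 3 ≤ (Np ∪ Nq ∪ Nr).ncard := by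
    have hset : ((P ⊔ Q ⊔ R).neighborSet w) = Np ∪ Nq ∪ Nr := by
      simp [SimpleGraph.Subgraph.neighborSet_sup]
      rfl
    simpa [Split, Set.mem_setOf_eq, hset] using hw
  have hpq2 : (Np ∪ Nq).ncard ≤ 2 := by
    simpa [SimpleGraph.Subgraph.neighborSet_sup] using split_le_two hsPQ w
  have hpr2 : (Np ∪ Nr).ncard ≤ 2 := by
    simpa [SimpleGraph.Subgraph.neighborSet_sup] using split_le_two hsPR w
  have hNqne : Nq.Nonempty := by
    rw [Set.nonempty_iff_ne_empty]
    intro h0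
    rw [h0, Set.union_empty] at hw3
    omega
  have hNrne : Nr.Nonempty := by
    rw [Set.nonempty_iff_ne_empty]
    intro h0
    rw [h0, Set.union_empty] at hw3
    omega
  obtain ⟨a, ha⟩ := hNqne
  obtain ⟨b, hb⟩ := hNrne
  have hwQ : w ∈ Q.verts := Q.edge_vert ha
  have hwR : w ∈ R.verts := R.edge_vert hb
  obtain ⟨e, heP, heQ⟩ := hPQ
  obtain ⟨x, hxP, hxQ, hxw⟩ : ∃ x, x ∈ P.verts ∧ x ∈ Q.verts ∧ x ≠ w := by
    induction e using Sym2.ind with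
    | _ x1 x2 =>
      rw [SimpleGraph.Subgraph.mem_edgeSet] at heP heQ
      by_cases h1 : x1 = w
      · subst h1
        exact ⟨x2, P.edge_vert heP.symm, Q.edge_vert heQ.symm, heP.ne.symm⟩
      · exact ⟨x1, P.edge_vert heP, Q.edge_vert heQ, h1⟩
  obtain ⟨e', heP', heR'⟩ := hPR
  obtain ⟨y, hyP, hyR, hyw⟩ : ∃ y, y ∈ P.verts ∧ y ∈ R.verts ∧ y ≠ w := by
    induction e' using Sym2.ind with
    | _ y1 y2 =>
      rw [SimpleGraph.Subgraph.mem_edgeSet] at heP' heR'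
      by_cases h1 : y1 = w
      · subst h1
        exact ⟨y2, P.edge_vert heP'.symm, R.edge_vert heR'.symm, heP'.ne.symm⟩
      · exact ⟨y1, P.edge_vert heP', R.edge_vert heR', h1⟩
  set wT : T.verts := ⟨w, hQT.1 hwQ⟩ with hwT
  set xT : T.verts := ⟨x, hQT.1 hxQ⟩ with hxT
  set yT : T.verts := ⟨y, hRT.1 hyR⟩ with hyT
  obtain ⟨A0, hA0⟩ := exists_walk (u := wT) (v := xT) hQT hQc hwQ hxQ
  obtain ⟨B0, hB0⟩ := exists_walk (u := wT) (v := yT) hRT hRc hwR hyR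
  set A : T.coe.Walk wT xT := A0.bypass with hA
  have hApath : A.IsPath := A0.bypass_isPath
  have hAe : ∀ e ∈ A.edges, Sym2.map Subtype.val e ∈ Q.edgeSet :=
    fun e he => hA0 e (A0.edges_bypass_subset he)
  set B : T.coe.Walk wT yT := B0.bypass with hB
  have hBpath : B.IsPath := B0.bypass_isPath
  have hBe : ∀ e ∈ B.edges, Sym2.map Subtype.val e ∈ R.edgeSet :=
    fun e he => hB0 e (B0.edges_bypass_subset he)
  have hshare : ∀ z, z ∈ A.support → z ∈ B.support → z = wT := by
    intro z hzA hzB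
    by_contra hzw
    have hne : wT ≠ z := fun h => hzw h.symm
    have tAp : (A.takeUntil z hzA).IsPath := hApath.takeUntil hzA
    have tBp : (B.takeUntil z hzB).IsPath := hBpath.takeUntil hzB
    have heq : A.takeUntil z hzA = B.takeUntil z hzB := by
      have := hT.IsAcyclic.path_unique ⟨A.takeUntil z hzA, tAp⟩ ⟨B.takeUntil z hzB, tBp⟩
      exact congrArg Subtype.val this
    obtain ⟨c, hc, hce, -⟩ := exists_first_edge (A.takeUntil z hzA) hne
    refine hQR ⟨Sym2.map Subtype.val s(wT, c), ?_, ?_⟩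
    · exact hAe _ (A.edges_takeUntil_subset hzA hce)
    · rw [heq] at hce
      exact hBe _ (B.edges_takeUntil_subset hzB hce)
  set C : T.coe.Walk xT yT := A.reverse.append B with hC
  have hCpath : C.IsPath := by
    rw [hC, SimpleGraph.Walk.isPath_def, SimpleGraph.Walk.support_append,
      SimpleGraph.Walk.support_reverse]
    refine List.Nodup.append ?_ ?_ ?_
    · exact List.nodup_reverse.2 hApath.support_nodup
    · exact hBpath.support_nodup.tail
    · intro z hz1 hz2
      have hzA : z ∈ A.support := List.mem_reverse.1 hz1
      have hzB : z ∈ B.support := by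
        rw [B.support_eq_cons]
        exact List.mem_cons_of_mem _ hz2
      rw [hshare z hzA hzB] at hz2
      have hnd := hBpath.support_nodup
      rw [B.support_eq_cons] at hnd
      exact (List.nodup_cons.1 hnd).1 hz2
  have hwC : wT ∈ C.support := by
    rw [hC, SimpleGraph.Walk.mem_support_append_iff]
    exact Or.inl (SimpleGraph.Walk.end_mem_support _)
  obtain ⟨D0, hD0⟩ := exists_walk (u := xT) (v := yT) hPT hPc hxP hyP
  have hCD : C = D0.bypass := by
    have := hT.IsAcyclic.path_unique ⟨C, hCpath⟩ ⟨D0.bypass, D0.bypass_isPath⟩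
    exact congrArg Subtype.val this
  have hCe : ∀ e ∈ C.edges, Sym2.map Subtype.val e ∈ P.edgeSet := by
    intro e he
    rw [hCD] at he
    exact hD0 e (D0.edges_bypass_subset he)
  have hwx : wT ≠ xT := fun h => hxw (congrArg Subtype.val h).symm
  have hwy : wT ≠ yT := fun h => hyw (congrArg Subtype.val h).symm
  set tC := C.takeUntil wT hwC with htC
  set dC := C.dropUntil wT hwC with hdC
  obtain ⟨c, hcadj, hce, hcsup⟩ := exists_first_edge tC.reverse hwx
  obtain ⟨d, hdadj, hde, hdsup⟩ := exists_first_edge dC hwy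
  have hce' : s(wT, c) ∈ tC.edges := by
    rwa [SimpleGraph.Walk.edges_reverse, List.mem_reverse] at hce
  have hcsup' : c ∈ tC.support := by
    rwa [SimpleGraph.Walk.support_reverse, List.mem_reverse] at hcsup
  have hcd : c ≠ d := by
    rintro rfl
    have hspec := C.take_spec hwC
    have hnd : (tC.support ++ dC.support.tail).Nodup := by
      rw [htC, hdC, ← SimpleGraph.Walk.support_append, hspec]
      exact hCpath.support_nodup
    have hdtail : c ∈ dC.support.tail := by
      rcases List.mem_cons.1 (dC.support_eq_cons ▸ hdsup) with h | h
      · exact absurd h.symm hdadj.ne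
      · exact h
    exact (List.disjoint_of_nodup_append hnd) hcsup' hdtail
  have hcP : P.Adj w (c : β) := by
    have := hCe _ (C.edges_takeUntil_subset hwC hce')
    rwa [Sym2.map_pair_eq, SimpleGraph.Subgraph.mem_edgeSet] at this
  have hdP : P.Adj w (d : β) := by
    have := hCe _ (C.edges_dropUntil_subset hwC hde)
    rwa [Sym2.map_pair_eq, SimpleGraph.Subgraph.mem_edgeSet] at this
  have h2 : 2 ≤ Np.ncard := by
    have h1 : 1 < Np.ncard := by
      rw [Set.one_lt_ncard_iff (Set.toFinite _)]
      exact ⟨(c : β), (d : β), hcP, hdP, fun h => hcd (Subtype.ext h)⟩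
    omega
  have e1 : Np = Np ∪ Nq := Set.eq_of_subset_of_ncard_le Set.subset_union_left
    (le_trans hpq2 h2) (Set.toFinite _)
  have e2 : Np = Np ∪ Nr := Set.eq_of_subset_of_ncard_le Set.subset_union_left
    (le_trans hpr2 h2) (Set.toFinite _)
  have hle : Np.ncard ≤ 2 := e1 ▸ hpq2
  rw [← e1, ← e2] at hw3
  omega

end Aux

lemma split_mono_left [Fintype β] {Pa Pb R : SubG β} : Split Pa R ⊆ Split (Pa ⊔ Pb) R := by
  intro z hz
  simp only [Split, Set.mem_setOf_eq] at hz ⊢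
  refine le_trans hz (Set.ncard_le_ncard ?_ (Set.toFinite _))
  intro t ht
  simp only [SimpleGraph.Subgraph.neighborSet_sup, Set.mem_union] at ht ⊢
  tauto

lemma edgeInt_sup_iff_s6 {Pa Pb R : SubG β} :
    EdgeInt (Pa ⊔ Pb) R ↔ EdgeInt Pa R ∨ EdgeInt Pb R := by
  unfold EdgeInt
  rw [SimpleGraph.Subgraph.edgeSet_sup, Set.union_inter_distrib_right, Set.union_nonempty]

lemma edgeInt_sup_iff' {Pa Pb R : SubG β} :
    EdgeInt R (Pa ⊔ Pb) ↔ EdgeInt R Pa ∨ EdgeInt R Pb := by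
  unfold EdgeInt
  rw [SimpleGraph.Subgraph.edgeSet_sup, Set.inter_union_distrib_left, Set.union_nonempty]

lemma contrG_adj {V : Type} [DecidableEq V] (K : SimpleGraph V) (p q : V)
    (a b : {x : V // x ≠ q}) :
    (contrG K p q).Adj a b ↔ a ≠ b ∧
      (K.Adj a b ∨ ((a : V) = p ∧ K.Adj q b) ∨ ((b : V) = p ∧ K.Adj a q)) := by
  constructor
  · rintro ⟨hne, x, y, hxy, hx, hy⟩
    refine ⟨hne, ?_⟩
    unfold mergeMap at hx hy
    by_cases hxq : x = q <;> by_cases hyq : y = q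
    · rw [hxq, hyq] at hxy
      exact absurd hxy (K.loopless.irrefl q)
    · rw [if_pos hxq] at hx
      rw [if_neg hyq] at hy
      rw [hxq] at hxy
      exact Or.inr (Or.inl ⟨hx, by rw [hy]; exact hxy⟩)
    · rw [if_pos hyq] at hy
      rw [if_neg hxq] at hx
      rw [hyq] at hxy
      exact Or.inr (Or.inr ⟨hy, by rw [hx]; exact hxy⟩)
    · rw [if_neg hxq] at hx
      rw [if_neg hyq] at hy
      exact Or.inl (by rw [hx, hy]; exact hxy)
  · rintro ⟨hne, h | ⟨hap, h⟩ | ⟨hbp, h⟩⟩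
    · exact ⟨hne, a, b, h, by simp [mergeMap, a.2], by simp [mergeMap, b.2]⟩
    · exact ⟨hne, q, b, h, by simp [mergeMap, hap], by simp [mergeMap, b.2]⟩
    · exact ⟨hne, a, q, h, by simp [mergeMap, a.2], by simp [mergeMap, hbp]⟩

/-- contraction preserves property (P3): the contracted pair admits a
representation satisfying (P3). -/
theorem stmt6 {V : Type} [Fintype V] [DecidableEq V]
    (G G' : SimpleGraph V) (hle : G' ≤ G)
    (hrep : ∃ (β : Type) (_ : Fintype β) (T : SubG β) (Ps : V → SubG β),
        IsRep T Ps G G' ∧ SatP3 Ps)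
    (p q : V) (hcon : ContractibleEdge G G' p q) :
    ∃ (β' : Type) (_ : Fintype β') (T' : SubG β') (Ps' : {x : V // x ≠ q} → SubG β'),
      IsRep T' Ps' (contrG G p q) (contrG G' p q) ∧ SatP3 Ps' := by
  classical
  obtain ⟨β, hfin, T, Ps, hrep, hp3⟩ := hrep
  obtain ⟨hpq, hcc⟩ := hcon
  have hG : ∀ u v : V, G.Adj u v ↔ u ≠ v ∧ EdgeInt (Ps u) (Ps v) := by
    intro u v
    rw [← hrep.ept]
    exact Iff.rfl
  have hG' : ∀ u v : V, G'.Adj u v ↔ u ≠ v ∧ NonSplit (Ps u) (Ps v) := by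
    intro u v
    rw [← hrep.enpt]
    exact Iff.rfl
  have hNS : NonSplit (Ps p) (Ps q) := ((hG' p q).1 hpq).2
  set U : SubG β := Ps p ⊔ Ps q with hU
  set Ps' : {x : V // x ≠ q} → SubG β :=
    fun v => if (v : V) = p then U else Ps (v : V) with hPs'
  have hPs'p : ∀ a : {x : V // x ≠ q}, (a : V) = p → Ps' a = U := by
    intro a h; rw [hPs']; simp [h]
  have hPs'n : ∀ a : {x : V // x ≠ q}, (a : V) ≠ p → Ps' a = Ps (a : V) := by
    intro a h; rw [hPs']; simp [h]
  have hsub_ne : ∀ a b : {x : V // x ≠ q}, a ≠ b → (a : V) ≠ (b : V) :=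
    fun a b h hh => h (Subtype.ext hh)
  have hKL1 : ∀ r : V, r ≠ p → r ≠ q → NonSplit (Ps p) (Ps r) → Split U (Ps r) = ∅ := by
    intro r hrp hrq hns
    have hnoQR : ¬ EdgeInt (Ps q) (Ps r) := by
      intro hei
      exact (hcc r).1 ((hG' p r).2 ⟨Ne.symm hrp, hns⟩) hrq
        ((hG q r).2 ⟨Ne.symm hrq, hei⟩)
    rw [hU]
    exact KL hrep.tree (hrep.sub p) (hrep.sub q) (hrep.sub r)
      (hrep.path p).1 (hrep.path q).1 (hrep.path r).1 hNS.1 hNS.2 hns.1 hns.2 hnoQR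
  have hKL2 : ∀ r : V, r ≠ p → r ≠ q → NonSplit (Ps q) (Ps r) → Split U (Ps r) = ∅ := by
    intro r hrp hrq hns
    have hnoPR : ¬ EdgeInt (Ps p) (Ps r) := by
      intro hei
      exact (hcc r).2 ((hG' q r).2 ⟨Ne.symm hrq, hns⟩) hrp
        ((hG p r).2 ⟨Ne.symm hrp, hei⟩)
    have hkl := KL hrep.tree (hrep.sub q) (hrep.sub p) (hrep.sub r)
      (hrep.path q).1 (hrep.path p).1 (hrep.path r).1 hNS.symm.1 hNS.symm.2 hns.1 hns.2 hnoPR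
    rw [sup_comm (Ps q) (Ps p)] at hkl
    rw [hU]
    exact hkl
  have keyNS : ∀ r : V, r ≠ p → r ≠ q →
      (NonSplit U (Ps r) ↔ NonSplit (Ps p) (Ps r) ∨ NonSplit (Ps q) (Ps r)) := by
    intro r hrp hrq
    constructor
    · rintro ⟨hei, hsp⟩
      rw [hU] at hei hsp
      have h1 : Split (Ps p) (Ps r) = ∅ := by
        have h := split_mono_left (Pa := Ps p) (Pb := Ps q) (R := Ps r)
        rw [hsp] at h
        exact Set.subset_empty_iff.1 h
      have h2 : Split (Ps q) (Ps r) = ∅ := by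
        have h := split_mono_left (Pa := Ps q) (Pb := Ps p) (R := Ps r)
        rw [sup_comm (Ps q) (Ps p), hsp] at h
        exact Set.subset_empty_iff.1 h
      rcases edgeInt_sup_iff_s6.1 hei with h | h
      · exact Or.inl ⟨h, h1⟩
      · exact Or.inr ⟨h, h2⟩
    · rintro (hns | hns)
      · refine ⟨?_, hKL1 r hrp hrq hns⟩
        rw [hU]
        exact edgeInt_sup_iff_s6.2 (Or.inl hns.1)
      · refine ⟨?_, hKL2 r hrp hrq hns⟩
        rw [hU]
        exact edgeInt_sup_iff_s6.2 (Or.inr hns.1)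
  have keyNS' : ∀ r : V, r ≠ p → r ≠ q →
      (NonSplit (Ps r) U ↔ NonSplit (Ps p) (Ps r) ∨ NonSplit (Ps q) (Ps r)) := by
    intro r h1 h2
    exact ⟨fun h => (keyNS r h1 h2).1 h.symm, fun h => ((keyNS r h1 h2).2 h).symm⟩
  have hUpath : IsPathSub U := by
    rw [hU]
    refine ⟨?_, ?_, ?_⟩
    · refine SimpleGraph.Subgraph.connected_sup (hrep.path p).1.preconnected (hrep.path q).1.preconnected ?_
      obtain ⟨e, heP, heQ⟩ := hNS.1
      induction e using Sym2.ind with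
      | _ a b =>
        rw [SimpleGraph.Subgraph.mem_edgeSet] at heP heQ
        exact ⟨a, (Ps p).edge_vert heP, (Ps q).edge_vert heQ⟩
    · obtain ⟨e, he⟩ := (hrep.path p).2.1
      exact ⟨e, by rw [SimpleGraph.Subgraph.edgeSet_sup]; exact Or.inl he⟩
    · exact fun v => split_le_two hNS.2 v
  -- EPT graph equality
  have hept : EPTg Ps' = contrG G p q := by
    ext a b
    rw [contrG_adj]
    show (a ≠ b ∧ EdgeInt (Ps' a) (Ps' b)) ↔ _
    refine and_congr_right fun hab => ?_
    have hab' : (a : V) ≠ (b : V) := hsub_ne a b hab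
    by_cases hap : (a : V) = p
    · by_cases hbp : (b : V) = p
      · exact absurd (Subtype.ext (hap.trans hbp.symm)) hab
      · rw [hPs'p a hap, hPs'n b hbp, hU, edgeInt_sup_iff_s6]
        constructor
        · rintro (h | h)
          · exact Or.inl ((hG _ _).2 ⟨hab', by rwa [hap]⟩)
          · exact Or.inr (Or.inl ⟨hap, (hG q _).2 ⟨Ne.symm b.2, h⟩⟩)
        · rintro (h | ⟨_, h⟩ | ⟨hbp', _⟩)
          · have := ((hG _ _).1 h).2
            exact Or.inl (by rwa [hap] at this)
          · exact Or.inr (((hG q _).1 h).2)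
          · exact absurd hbp' hbp
    · by_cases hbp : (b : V) = p
      · rw [hPs'n a hap, hPs'p b hbp, hU, edgeInt_sup_iff']
        constructor
        · rintro (h | h)
          · exact Or.inl ((hG _ _).2 ⟨hab', by rwa [hbp]⟩)
          · exact Or.inr (Or.inr ⟨hbp, (hG _ q).2 ⟨a.2, h⟩⟩)
        · rintro (h | ⟨hap', _⟩ | ⟨_, h⟩)
          · have := ((hG _ _).1 h).2
            exact Or.inl (by rwa [hbp] at this)
          · exact absurd hap' hap
          · exact Or.inr (((hG _ q).1 h).2)
      · rw [hPs'n a hap, hPs'n b hbp]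
        constructor
        · intro h
          exact Or.inl ((hG _ _).2 ⟨hab', h⟩)
        · rintro (h | ⟨hap', _⟩ | ⟨hbp', _⟩)
          · exact ((hG _ _).1 h).2
          · exact absurd hap' hap
          · exact absurd hbp' hbp
  -- ENPT graph equality
  have henpt : ENPTg Ps' = contrG G' p q := by
    ext a b
    rw [contrG_adj]
    show (a ≠ b ∧ NonSplit (Ps' a) (Ps' b)) ↔ _
    refine and_congr_right fun hab => ?_
    have hab' : (a : V) ≠ (b : V) := hsub_ne a b hab
    by_cases hap : (a : V) = p
    · by_cases hbp : (b : V) = p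
      · exact absurd (Subtype.ext (hap.trans hbp.symm)) hab
      · rw [hPs'p a hap, hPs'n b hbp, keyNS _ hbp b.2]
        constructor
        · rintro (h | h)
          · exact Or.inl ((hG' _ _).2 ⟨hab', by rwa [hap]⟩)
          · exact Or.inr (Or.inl ⟨hap, (hG' q _).2 ⟨Ne.symm b.2, h⟩⟩)
        · rintro (h | ⟨_, h⟩ | ⟨hbp', _⟩)
          · have := ((hG' _ _).1 h).2
            exact Or.inl (by rwa [hap] at this)
          · exact Or.inr (((hG' q _).1 h).2)
          · exact absurd hbp' hbp
    · by_cases hbp : (b : V) = p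
      · rw [hPs'n a hap, hPs'p b hbp, keyNS' _ hap a.2]
        constructor
        · rintro (h | h)
          · exact Or.inl ((hG' _ _).2 ⟨hab', by rw [hbp]; exact h.symm⟩)
          · exact Or.inr (Or.inr ⟨hbp, (hG' _ q).2 ⟨a.2, h.symm⟩⟩)
        · rintro (h | ⟨hap', _⟩ | ⟨_, h⟩)
          · have := ((hG' _ _).1 h).2
            rw [hbp] at this
            exact Or.inl this.symm
          · exact absurd hap' hap
          · exact Or.inr (((hG' _ q).1 h).2.symm)
      · rw [hPs'n a hap, hPs'n b hbp]
        constructor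
        · intro h
          exact Or.inl ((hG' _ _).2 ⟨hab', h⟩)
        · rintro (h | ⟨hap', _⟩ | ⟨hbp', _⟩)
          · exact ((hG' _ _).1 h).2
          · exact absurd hap' hap
          · exact absurd hbp' hbp
  -- property (P3)
  have noRed : ∀ (f : Sym2 β) (x y : V), x ≠ p → x ≠ q → y ≠ p → y ≠ q → x ≠ y →
      f ∈ U.edgeSet → f ∈ (Ps x).edgeSet → f ∈ (Ps y).edgeSet →
      (Split U (Ps x)).Nonempty → (Split U (Ps y)).Nonempty →
      (Split (Ps x) (Ps y)).Nonempty → False := by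
    intro f x y hxp hxq hyp hyq hxy hfU hfx hfy hsx hsy hsxy
    rw [hU, SimpleGraph.Subgraph.edgeSet_sup] at hfU
    rcases hfU with hfp | hfq
    · have hx' : (Split (Ps p) (Ps x)).Nonempty := by
        rw [Set.nonempty_iff_ne_empty]
        intro h0
        rw [hKL1 x hxp hxq ⟨⟨f, hfp, hfx⟩, h0⟩] at hsx
        exact Set.not_nonempty_empty hsx
      have hy' : (Split (Ps p) (Ps y)).Nonempty := by
        rw [Set.nonempty_iff_ne_empty]
        intro h0
        rw [hKL1 y hyp hyq ⟨⟨f, hfp, hfy⟩, h0⟩] at hsy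
        exact Set.not_nonempty_empty hsy
      exact hp3 ⟨f, p, x, y, Ne.symm hxp, Ne.symm hyp, hxy, hfp, hfx, hfy, hx', hy', hsxy⟩
    · have hx' : (Split (Ps q) (Ps x)).Nonempty := by
        rw [Set.nonempty_iff_ne_empty]
        intro h0
        rw [hKL2 x hxp hxq ⟨⟨f, hfq, hfx⟩, h0⟩] at hsx
        exact Set.not_nonempty_empty hsx
      have hy' : (Split (Ps q) (Ps y)).Nonempty := by
        rw [Set.nonempty_iff_ne_empty]
        intro h0
        rw [hKL2 y hyp hyq ⟨⟨f, hfq, hfy⟩, h0⟩] at hsy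
        exact Set.not_nonempty_empty hsy
      exact hp3 ⟨f, q, x, y, Ne.symm hxq, Ne.symm hyq, hxy, hfq, hfx, hfy, hx', hy', hsxy⟩
  have hsat : SatP3 Ps' := by
    intro hcl
    obtain ⟨f, a, b, c, hab, hac, hbc, hfa, hfb, hfc, s1, s2, s3⟩ := hcl
    by_cases hap : (a : V) = p
    · have hbp : (b : V) ≠ p := fun h => hab (Subtype.ext (hap.trans h.symm))
      have hcp : (c : V) ≠ p := fun h => hac (Subtype.ext (hap.trans h.symm))
      rw [hPs'p a hap] at hfa s1 s2
      rw [hPs'n b hbp] at hfb s1 s3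
      rw [hPs'n c hcp] at hfc s2 s3
      exact noRed f _ _ hbp b.2 hcp c.2 (hsub_ne b c hbc) hfa hfb hfc s1 s2 s3
    · by_cases hbp : (b : V) = p
      · have hcp : (c : V) ≠ p := fun h => hbc (Subtype.ext (hbp.trans h.symm))
        rw [hPs'n a hap] at hfa s1 s2
        rw [hPs'p b hbp] at hfb s1 s3
        rw [hPs'n c hcp] at hfc s2 s3
        rw [Split_comm] at s1
        exact noRed f _ _ hap a.2 hcp c.2 (hsub_ne a c hac) hfb hfa hfc s1 s3 s2
      · by_cases hcp : (c : V) = p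
        · rw [hPs'n a hap] at hfa s1 s2
          rw [hPs'n b hbp] at hfb s1 s3
          rw [hPs'p c hcp] at hfc s2 s3
          rw [Split_comm] at s2 s3
          exact noRed f _ _ hap a.2 hbp b.2 (hsub_ne a b hab) hfc hfa hfb s2 s3 s1
        · rw [hPs'n a hap] at hfa s1 s2
          rw [hPs'n b hbp] at hfb s1 s3
          rw [hPs'n c hcp] at hfc s2 s3
          exact hp3 ⟨f, _, _, _, hsub_ne a b hab, hsub_ne a c hac, hsub_ne b c hbc,
            hfa, hfb, hfc, s1, s2, s3⟩
  refine ⟨β, hfin, T, Ps', ⟨hrep.tree, ?_, ?_, hept, henpt⟩, hsat⟩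
  · intro v
    by_cases h : (v : V) = p
    · rw [hPs'p v h, hU]
      exact sup_le (hrep.sub p) (hrep.sub q)
    · rw [hPs'n v h]
      exact hrep.sub _
  · intro v
    by_cases h : (v : V) = p
    · rw [hPs'p v h]
      exact hUpath
    · rw [hPs'n v h]
      exact hrep.path _


end ENPT
end
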